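/- Let X be a proper hyperbolic geodesic metric space with Gromov boundary ∂X. Then the product ∂X × X admits a distance function d̃ which is invariant under the diagonal action of the isometry group Iso(X) and which induces the product topology on ∂X × X. -/

import Mathlib

open Metric Filter Set MeasureTheory Topology Pointwise
open scoped ENNReal NNReal

noncomputable section

namespace PaperHyp

variable {X : Type*} [MetricSpace X]

/-- `f` parametrizes a geodesic segment from `x` to `y` on the interval `[0, dist x y]`. -/
def IsGeodesicSegmentBetween (f : ℝ → X) (x y : X) : Prop :=
  f 0 = x ∧ f (dist x y) = y ∧
    ∀ s ∈ Set.Icc (0 : ℝ) (dist x y), ∀ t ∈ Set.Icc (0 : ℝ) (dist x y),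
      dist (f s) (f t) = |s - t|

/-- `X` is a geodesic metric space: any two points are joined by a geodesic segment. -/
def GeodesicSpace (X : Type*) [MetricSpace X] : Prop :=
  ∀ x y : X, ∃ f : ℝ → X, IsGeodesicSegmentBetween f x y

/-- The set `s` is the image of a geodesic segment from `x` to `y`. -/
def IsGeodesicSegmentSet (s : Set X) (x y : X) : Prop :=
  ∃ f : ℝ → X, IsGeodesicSegmentBetween f x y ∧ s = f '' Set.Icc 0 (dist x y)

/-- The `δ`-thin triangle condition: each side of a geodesic triangle is contained in the
`δ`-neighborhood of the union of the other two sides. -/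
def DeltaThinTriangles (X : Type*) [MetricSpace X] (δ : ℝ) : Prop :=
  ∀ x y z : X, ∀ a b c : Set X,
    IsGeodesicSegmentSet a x y → IsGeodesicSegmentSet b y z → IsGeodesicSegmentSet c x z →
      ∀ p ∈ c, ∃ q ∈ a ∪ b, dist p q ≤ δ

/-- Gromov hyperbolicity: the `δ`-thin triangle condition for some `δ > 0`. -/
def GromovHyperbolic (X : Type*) [MetricSpace X] : Prop :=
  ∃ δ > 0, DeltaThinTriangles X δ

/-- The Gromov product `(y,z)_x`. -/
def gromovProd (x y z : X) : ℝ := (dist y x + dist z x - dist y z) / 2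

/-- A sequence converging to infinity in the sense of Gromov. -/
def IsGromovSeq (x : X) (u : ℕ → X) : Prop :=
  Tendsto (fun p : ℕ × ℕ => gromovProd x (u p.1) (u p.2)) atTop atTop

/-- The space of Gromov sequences. -/
def GromovSeq (X : Type*) [MetricSpace X] : Type _ :=
  {u : ℕ → X // ∀ x : X, IsGromovSeq x u}

/-- Two Gromov sequences are equivalent if their mutual Gromov products tend to infinity. -/
def gromovRel (u v : GromovSeq X) : Prop :=
  ∀ x : X, Tendsto (fun p : ℕ × ℕ => gromovProd x (u.1 p.1) (v.1 p.2)) atTop atTop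

/-- The Gromov boundary of `X`. -/
def GromovBoundary (X : Type*) [MetricSpace X] : Type _ :=
  Quot (gromovRel (X := X))

/-- A sequence in `X` converges to the boundary point `ξ`. -/
def SeqConvToBoundary (u : ℕ → X) (ξ : GromovBoundary X) : Prop :=
  ∃ h : ∀ x : X, IsGromovSeq x u, Quot.mk gromovRel (⟨u, h⟩ : GromovSeq X) = ξ

/-- The isometry group of `X`. -/
abbrev Iso (X : Type*) [MetricSpace X] := X ≃ᵢ X

/-- The compact-open topology on the isometry group. -/
instance : TopologicalSpace (Iso X) :=
  TopologicalSpace.induced (fun g : Iso X => (ContinuousMap.mk g g.continuous : C(X, X)))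
    ContinuousMap.compactOpen

lemma gromovProd_isometry (g : Iso X) (x y z : X) :
    gromovProd x (g y) (g z) = gromovProd (g.symm x) y z := by
  have h1 : dist (g y) x = dist y (g.symm x) := by
    conv_lhs => rw [← g.apply_symm_apply x]
    rw [g.dist_eq]
  have h2 : dist (g z) x = dist z (g.symm x) := by
    conv_lhs => rw [← g.apply_symm_apply x]
    rw [g.dist_eq]
  unfold gromovProd
  rw [h1, h2, g.dist_eq]

lemma isGromovSeq_comp (g : Iso X) {u : ℕ → X} (h : ∀ x : X, IsGromovSeq x u) (x : X) :
    IsGromovSeq x (fun n => g (u n)) := by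
  have hx := h (g.symm x)
  unfold IsGromovSeq at hx ⊢
  simp only [gromovProd_isometry]
  exact hx

/-- An isometry maps Gromov sequences to Gromov sequences. -/
def GromovSeq.map (g : Iso X) (u : GromovSeq X) : GromovSeq X :=
  ⟨fun n => g (u.1 n), fun x => isGromovSeq_comp g u.2 x⟩

lemma gromovRel_map (g : Iso X) {u v : GromovSeq X} (h : gromovRel u v) :
    gromovRel (u.map g) (v.map g) := by
  intro x
  have hx := h (g.symm x)
  show Tendsto (fun p : ℕ × ℕ => gromovProd x (g (u.1 p.1)) (g (v.1 p.2))) atTop atTop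
  simp only [gromovProd_isometry]
  exact hx

/-- The induced action of an isometry on the Gromov boundary. -/
def boundaryMap (g : Iso X) : GromovBoundary X → GromovBoundary X :=
  Quot.map (GromovSeq.map g) (fun _ _ h => gromovRel_map g h)

/-- The Gromov product of two boundary points, based at `x`. -/
def gromovProdB (x : X) (ξ η : GromovBoundary X) : ℝ≥0∞ :=
  ⨆ (u : GromovSeq X) (_ : Quot.mk gromovRel u = ξ) (v : GromovSeq X) (_ : Quot.mk gromovRel v = η),
    Filter.liminf (fun p : ℕ × ℕ => ENNReal.ofReal (gromovProd x (u.1 p.1) (v.1 p.2))) atTop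

/-- The (visual) topology on the Gromov boundary. -/
instance : TopologicalSpace (GromovBoundary X) where
  IsOpen U := ∀ ξ ∈ U, ∀ x : X, ∃ R : ℝ≥0∞, R ≠ ⊤ ∧ {η | R < gromovProdB x ξ η} ⊆ U
  isOpen_univ := fun _ _ _ => ⟨0, ENNReal.zero_ne_top, Set.subset_univ _⟩
  isOpen_inter := by
    intro U V hU hV ξ hξ x
    obtain ⟨R₁, hR₁, hs₁⟩ := hU ξ hξ.1 x
    obtain ⟨R₂, hR₂, hs₂⟩ := hV ξ hξ.2 x
    refine ⟨max R₁ R₂, (max_lt hR₁.lt_top hR₂.lt_top).ne, fun η hη => ?_⟩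
    rw [Set.mem_setOf_eq, max_lt_iff] at hη
    exact ⟨hs₁ hη.1, hs₂ hη.2⟩
  isOpen_sUnion := by
    intro S hS ξ hξ x
    obtain ⟨U, hUS, hξU⟩ := hξ
    obtain ⟨R, hR, hsub⟩ := hS U hUS ξ hξU x
    exact ⟨R, hR, hsub.trans (Set.subset_sUnion_of_mem hUS)⟩

/-- The limit set of a subgroup of the isometry group: all accumulation points in the
Gromov boundary of an orbit in `X`. -/
def limitSet (G : Subgroup (Iso X)) : Set (GromovBoundary X) :=
  {ξ | ∃ (x : X) (g : ℕ → G), SeqConvToBoundary (fun n => (g n : Iso X) x) ξ}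

/-- A subgroup of the isometry group is elementary if its limit set contains at most two
points. -/
def IsElementary (G : Subgroup (Iso X)) : Prop :=
  ∃ a b : GromovBoundary X, limitSet G ⊆ {a, b}

/-- `g` is a hyperbolic isometry with attracting fixed point `a` and repelling fixed
point `b`. -/
def IsHyperbolicWithFP (g : Iso X) (a b : GromovBoundary X) : Prop :=
  a ≠ b ∧ boundaryMap g a = a ∧ boundaryMap g b = b ∧
    (∀ x : X, SeqConvToBoundary (fun n => (g ^ n) x) a) ∧
    (∀ x : X, SeqConvToBoundary (fun n => (g⁻¹ ^ n) x) b)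

/-- `g` is a hyperbolic isometry. -/
def IsHyperbolicIsom (g : Iso X) : Prop :=
  ∃ a b : GromovBoundary X, IsHyperbolicWithFP g a b

/-- `(x,y,z)` is a triple of pairwise distinct points of the limit set of `G`. -/
def InTripleSpace (G : Subgroup (Iso X)) (x y z : GromovBoundary X) : Prop :=
  x ∈ limitSet G ∧ y ∈ limitSet G ∧ z ∈ limitSet G ∧ x ≠ y ∧ x ≠ z ∧ y ≠ z

/-- The space of triples of pairwise distinct points in the limit set of `G`. -/
def tripleSet (G : Subgroup (Iso X)) :
    Set (GromovBoundary X × GromovBoundary X × GromovBoundary X) :=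
  {t | InTripleSpace G t.1 t.2.1 t.2.2}

/-- `G` acts transitively on the complement of the diagonal in `Λ × Λ`. -/
def ActsTransitivelyOffDiagonal (G : Subgroup (Iso X)) : Prop :=
  ∀ p q : GromovBoundary X × GromovBoundary X,
    p.1 ∈ limitSet G → p.2 ∈ limitSet G → p.1 ≠ p.2 →
    q.1 ∈ limitSet G → q.2 ∈ limitSet G → q.1 ≠ q.2 →
    ∃ h : G, (boundaryMap (h : Iso X) p.1, boundaryMap (h : Iso X) p.2) = q

/-- `γ` is a geodesic ray from `x` to the boundary point `a`. -/
def IsGeodesicRayTo (γ : ℝ → X) (x : X) (a : GromovBoundary X) : Prop :=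
  γ 0 = x ∧ (∀ s ∈ Set.Ici (0 : ℝ), ∀ t ∈ Set.Ici (0 : ℝ), dist (γ s) (γ t) = |s - t|) ∧
    SeqConvToBoundary (fun n => γ n) a

/-- `γ` is a biinfinite geodesic from the boundary point `b` to the boundary point `a`. -/
def IsGeodesicLine (γ : ℝ → X) (b a : GromovBoundary X) : Prop :=
  (∀ s t : ℝ, dist (γ s) (γ t) = |s - t|) ∧
    SeqConvToBoundary (fun n => γ n) a ∧ SeqConvToBoundary (fun n => γ (-(n : ℝ))) b

/-- The Busemann function `β_a(y,x)`. -/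
def busemann (a : GromovBoundary X) (y x : X) : ℝ :=
  sSup {r : ℝ | ∃ γ : ℝ → X, IsGeodesicRayTo γ x a ∧
    r = Filter.limsup (fun t : ℝ => dist y (γ t) - t) Filter.atTop}

section Cochains

variable {G : Type*} {E : Type*} [AddCommGroup E]

/-- The homogeneous coboundary of a `1`-cochain. -/
def coboundaryOf (h : G → G → E) : G → G → G → E :=
  fun a b c => h b c - h a c + h a b

/-- The homogeneous cocycle condition for a `2`-cochain (a function of three variables). -/
def IsCocycle3 (f : G → G → G → E) : Prop :=
  ∀ a b c d : G, f b c d - f a c d + f a b d - f a b c = 0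

end Cochains

/-- `ρ` is a distance function. -/
def IsMetricDist {α : Type*} (ρ : α → α → ℝ) : Prop :=
  (∀ a, ρ a a = 0) ∧ (∀ a b, a ≠ b → 0 < ρ a b) ∧ (∀ a b, ρ a b = ρ b a) ∧
    ∀ a b c, ρ a c ≤ ρ a b + ρ b c

/-- The topology induced by a distance function. -/
def distTopology {α : Type*} (ρ : α → α → ℝ) : TopologicalSpace α :=
  TopologicalSpace.generateFrom {U | ∃ (c : α) (r : ℝ), U = {y | ρ c y < r}}

/-- A topological space is locally euclidean. -/
def LocallyEuclidean (G : Type*) [TopologicalSpace G] : Prop :=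
  ∃ n : ℕ, ∀ x : G, ∃ U : Set G, IsOpen U ∧ x ∈ U ∧
    ∃ V : Set (Fin n → ℝ), IsOpen V ∧ Nonempty (U ≃ₜ V)

/-- A proper cocompact continuous isometric action of `L` on a proper geodesic Gromov
hyperbolic space. -/
structure GeomHypActionOn (L : Type*) [Group L] [TopologicalSpace L]
    (Y : Type) [MetricSpace Y] where
  properY : ProperSpace Y
  geodesicY : GeodesicSpace Y
  hypY : GromovHyperbolic Y
  act : L →* Iso Y
  continuous_act : Continuous fun p : L × Y => act p.1 p.2
  proper_act : ∀ K : Set Y, IsCompact K → IsCompact {g : L | ¬Disjoint ((act g) '' K) K}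
  cocompact_act : ∃ K : Set Y, IsCompact K ∧ ⋃ g : L, (act g) '' K = Set.univ

/-- `L` acts geometrically on some proper geodesic Gromov hyperbolic space. (For a
connected semisimple Lie group with finite center this characterizes the groups of
real rank one.) -/
def ActsGeometricallyOnHypSpace (L : Type*) [Group L] [TopologicalSpace L] : Prop :=
  ∃ (Y : Type) (m : MetricSpace Y), Nonempty (@GeomHypActionOn L _ _ Y m)

/-- `L` is a simple Lie group of (real) rank one. -/
def IsSimpleLieGroupOfRankOne (L : Type*) [Group L] [TopologicalSpace L] : Prop :=
  IsTopologicalGroup L ∧ LocallyEuclidean L ∧ IsConnected (Set.univ : Set L) ∧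
    (∃ g h : L, g * h ≠ h * g) ∧ ¬IsCompact (Set.univ : Set L) ∧
    (∀ N : Subgroup L, N.Normal → N ≤ Subgroup.center L ∨ N = ⊤) ∧
    ActsGeometricallyOnHypSpace L

/-- `G` is a compact extension of a simple Lie group of rank one: it has a compact normal
subgroup such that the quotient is a simple Lie group of rank one. -/
def IsCompactExtensionOfRankOneSimple (G : Type*) [Group G] [TopologicalSpace G] : Prop :=
  ∃ K : Subgroup G, ∃ hK : K.Normal, IsCompact (K : Set G) ∧
    (letI := hK; IsSimpleLieGroupOfRankOne (G ⧸ K))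

/-- `G` is a compact extension of a totally disconnected locally compact group. -/
def IsCompactExtensionOfTotallyDisconnected (G : Type*) [Group G] [TopologicalSpace G] : Prop :=
  ∃ K : Subgroup G, K.Normal ∧ IsCompact (K : Set G) ∧
    TotallyDisconnectedSpace (G ⧸ K) ∧ LocallyCompactSpace (G ⧸ K)

/-- Semisimplicity of a Lie group: the solvable radical is trivial. -/
def HasTrivialSolvableRadical (G : Type*) [Group G] [TopologicalSpace G] : Prop :=
  ∀ N : Subgroup G, N.Normal → IsClosed (N : Set G) → IsConnected (N : Set G) →
    IsSolvable N → N = ⊥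

/-- All compact normal subgroups are finite (no compact factors, for a semisimple Lie
group with finite center). -/
def HasNoCompactFactors (G : Type*) [Group G] [TopologicalSpace G] : Prop :=
  ∀ N : Subgroup G, N.Normal → IsCompact (N : Set G) → (N : Set G).Finite

/-- The center of `G` is finite. -/
def HasFiniteCenter (G : Type*) [Group G] : Prop :=
  (Subgroup.center G : Set G).Finite

/-- For a semisimple Lie group with finite center and no compact factors: rank at least
two, i.e. the group is noncompact and not of rank one (it acts geometrically on no
Gromov hyperbolic space). -/
def HasRankAtLeastTwo (G : Type*) [Group G] [TopologicalSpace G] : Prop :=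
  ¬IsCompact (Set.univ : Set G) ∧ ¬ActsGeometricallyOnHypSpace G

/-- `G` has no factors of rank one: there is no continuous surjective homomorphism from
`G` onto a simple Lie group of rank one. -/
def HasNoRankOneFactors (G : Type*) [Group G] [TopologicalSpace G] : Prop :=
  ∀ (L : Type) [Group L] [TopologicalSpace L],
    IsSimpleLieGroupOfRankOne L → ∀ f : G →* L, Continuous f → ¬Function.Surjective f

/-- `Γ` is a lattice in `G` (with respect to the Haar measure `μ`): a discrete subgroup
admitting a Borel fundamental domain of finite Haar measure. -/
def IsLattice {G : Type*} [Group G] [TopologicalSpace G] [MeasurableSpace G]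
    (Γ : Subgroup G) (μ : Measure G) : Prop :=
  IsClosed (Γ : Set G) ∧ DiscreteTopology Γ ∧
    ∃ D : Set G, MeasurableSet D ∧ μ D ≠ ⊤ ∧ ∀ g : G, ∃! γ : Γ, (γ : G) * g ∈ D

/-- `Γ` is an irreducible lattice in `G`: its projection to each factor is dense. -/
def IsIrreducibleLattice {G : Type*} [Group G] [TopologicalSpace G] [MeasurableSpace G]
    (Γ : Subgroup G) (μ : Measure G) : Prop :=
  IsLattice Γ μ ∧ ∀ N : Subgroup G, N.Normal → IsClosed (N : Set G) →
    ¬IsCompact (N : Set G) → N ≠ ⊤ → Dense ((Γ ⊔ N : Subgroup G) : Set G)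

/-- Amenability of a topological group: there is a left-invariant mean on the bounded
continuous functions. -/
def IsAmenableTopGroup (G : Type*) [Group G] [TopologicalSpace G] : Prop :=
  ∃ m : BoundedContinuousFunction G ℝ →ₗ[ℝ] ℝ,
    (∀ f : BoundedContinuousFunction G ℝ, (∀ x, 0 ≤ f x) → 0 ≤ m f) ∧
    m (BoundedContinuousFunction.const G 1) = 1 ∧
    ∀ (g : G) (f f' : BoundedContinuousFunction G ℝ), (∀ x, f' x = f (g * x)) → m f' = m f

/-- The action of `Γ` on `(S,ν)` is measure preserving. -/
def IsMeasurePreservingSMul (Γ : Type*) [Group Γ] (S : Type*) [MeasurableSpace S]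
    [MulAction Γ S] (ν : Measure S) : Prop :=
  ∀ γ : Γ, MeasurePreserving (fun s : S => γ • s) ν ν

/-- The action of `Γ` on `(S,ν)` is mildly mixing: there are no nontrivial recurrent
sets. -/
def MildlyMixingSMul (Γ : Type*) [Group Γ] (S : Type*) [MeasurableSpace S] [MulAction Γ S]
    (ν : Measure S) : Prop :=
  ∀ A : Set S, MeasurableSet A → ν A ≠ 0 → ν A ≠ ν Set.univ →
    ∀ g : ℕ → Γ, Tendsto g atTop Filter.cofinite →
      Filter.liminf (fun i => ν (symmDiff A (g i • A))) atTop ≠ 0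

/-- An `Iso X`-valued cocycle for a measure preserving action of `Γ` on `(S,ν)`. -/
def IsIsoCocycle {Γ : Type*} [Group Γ] {S : Type*} [MeasurableSpace S] [MulAction Γ S]
    (ν : Measure S) {X : Type*} [MetricSpace X] (α : Γ → S → Iso X) : Prop :=
  (∀ γ : Γ, @Measurable S (Iso X) _ (borel (Iso X)) (α γ)) ∧
    ∀ g h : Γ, ∀ᵐ s ∂ν, α (g * h) s = α g (h • s) * α h s

/-- The cocycle `α` is cohomologous to a cocycle taking values in the subgroup `H`. -/
def IsCohomologousToCocycleInto {Γ : Type*} [Group Γ] {S : Type*} [MeasurableSpace S]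
    [MulAction Γ S] (ν : Measure S) {X : Type*} [MetricSpace X] (α : Γ → S → Iso X)
    (H : Subgroup (Iso X)) : Prop :=
  ∃ β : Γ → S → Iso X, IsIsoCocycle ν β ∧ (∀ γ : Γ, ∀ᵐ s ∂ν, β γ s ∈ H) ∧
    ∃ φ : S → Iso X, @Measurable S (Iso X) _ (borel (Iso X)) φ ∧
      ∀ γ : Γ, ∀ᵐ s ∂ν, φ (γ • s) * α γ s = β γ s * φ s

/-- `(B, lam)` is a strong boundary for `G`: a standard Borel `G`-space with a
quasi-invariant ergodic probability measure such that the action is amenable (here: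
admits equivariant Furstenberg maps into spaces of probability measures on compact
metrizable `G`-spaces) and doubly ergodic with coefficients in every separable Banach
module for `G`. -/
def IsStrongBoundary (G : Type*) [Group G] [TopologicalSpace G] [MeasurableSpace G]
    (B : Type*) [MeasurableSpace B] [MulAction G B] (lam : Measure B) : Prop :=
  IsProbabilityMeasure lam ∧
  Measurable (fun p : G × B => p.1 • p.2) ∧
  (∀ g : G, Measure.map (fun b : B => g • b) lam ≪ lam ∧
    lam ≪ Measure.map (fun b : B => g • b) lam) ∧
  (∀ A : Set B, MeasurableSet A → (∀ g : G, (fun b : B => g • b) ⁻¹' A = A) →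
    lam A = 0 ∨ lam A = 1) ∧
  (∀ (Z : Type) [TopologicalSpace Z] [CompactSpace Z] [TopologicalSpace.MetrizableSpace Z]
      [MeasurableSpace Z] [BorelSpace Z] (actZ : G → Z → Z),
      Continuous (fun p : G × Z => actZ p.1 p.2) →
      (∀ z : Z, actZ 1 z = z) → (∀ g h z, actZ (g * h) z = actZ g (actZ h z)) →
      ∃ Φ : B → ProbabilityMeasure Z,
        @Measurable B (ProbabilityMeasure Z) _ (borel (ProbabilityMeasure Z)) Φ ∧
        ∀ g : G, ∀ᵐ b ∂lam, (Φ (g • b) : Measure Z) = Measure.map (actZ g) (Φ b : Measure Z)) ∧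
  (∀ (E : Type) [NormedAddCommGroup E] [NormedSpace ℝ E] [MeasurableSpace E] [BorelSpace E]
      [TopologicalSpace.SeparableSpace E] (actE : G → E → E),
      (∀ v : E, actE 1 v = v) → (∀ g h v, actE (g * h) v = actE g (actE h v)) →
      (∀ g : G, IsLinearMap ℝ (actE g)) → (∀ (g : G) (v : E), ‖actE g v‖ = ‖v‖) →
      Continuous (fun p : G × E => actE p.1 p.2) →
      ∀ F : B × B → E, Measurable F → (∃ C, ∀ p, ‖F p‖ ≤ C) →
        (∀ g : G, ∀ᵐ p ∂(lam.prod lam), F (g • p.1, g • p.2) = actE g (F p)) →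
        ∃ c : E, F =ᵐ[lam.prod lam] fun _ => c)

/-- `X` has bounded growth: for some `b > 0`, every ball of radius `R ≥ 1` contains at
most `b·e^{bR}` disjoint balls of radius `1`. -/
def BoundedGrowth (X : Type*) [MetricSpace X] : Prop :=
  ∃ b : ℝ, 0 < b ∧ ∀ R : ℝ, 1 ≤ R → ∀ x : X, ∀ t : Finset X,
    (∀ y ∈ t, Metric.ball y 1 ⊆ Metric.ball x R) →
    ((t : Set X).Pairwise fun y z => Disjoint (Metric.ball y 1) (Metric.ball z 1)) →
    (t.card : ℝ) ≤ b * Real.exp (b * R)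

/-- The action of `Γ` on `X` given by `ρ` is properly discontinuous. -/
def ProperlyDiscontinuousIso {Γ : Type*} [Group Γ] {X : Type*} [MetricSpace X]
    (ρ : Γ →* Iso X) : Prop :=
  ∀ K : Set X, IsCompact K → {γ : Γ | ¬Disjoint ((ρ γ) '' K) K}.Finite


lemma dist_decomp {s : Set X} {x y : X} (hs : IsGeodesicSegmentSet s x y) {p : X}
    (hp : p ∈ s) : dist x p + dist p y = dist x y := by
  obtain ⟨f, ⟨hf0, hfd, hiso⟩, rfl⟩ := hs
  obtain ⟨t, ht, rfl⟩ := hp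
  have h0d : (0:ℝ) ≤ dist x y := dist_nonneg
  have h1 := hiso 0 ⟨le_refl _, h0d⟩ t ht
  have h2 := hiso t ht (dist x y) ⟨h0d, le_refl _⟩
  rw [hf0] at h1; rw [hfd] at h2
  have e1 : dist x (f t) = t := by
    rw [h1, abs_of_nonpos (by linarith [ht.1])]; ring
  have e2 : dist (f t) y = dist x y - t := by
    rw [h2, abs_of_nonpos (by linarith [ht.2])]; ring
  rw [e1, e2]; ring

lemma gromovProd_le_dist_of_mem {s : Set X} {x y : X} (hs : IsGeodesicSegmentSet s x y)
    {p : X} (hp : p ∈ s) (w : X) : gromovProd w x y ≤ dist w p := by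
  have hd := dist_decomp hs hp
  have d1 : dist x w ≤ dist x p + dist p w := dist_triangle ..
  have d2 : dist y w ≤ dist y p + dist p w := dist_triangle ..
  have := dist_comm x p; have := dist_comm y p; have := dist_comm w p
  unfold gromovProd
  linarith

lemma endpoint_mem {s : Set X} {x y : X} (hs : IsGeodesicSegmentSet s x y) :
    x ∈ s ∧ y ∈ s := by
  obtain ⟨f, ⟨hf0, hfd, _⟩, rfl⟩ := hs
  constructor
  · exact ⟨0, ⟨le_refl _, dist_nonneg⟩, hf0⟩
  · exact ⟨dist x y, ⟨dist_nonneg, le_refl _⟩, hfd⟩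

/-- The four-point inequality from thin triangles. -/
lemma fourpoint {δ : ℝ} (hδ : 0 < δ) (hgeo : GeodesicSpace X)
    (hthin : DeltaThinTriangles X δ) (w x y z : X) :
    min (gromovProd w x z) (gromovProd w z y) - 5 * δ ≤ gromovProd w x y := by
  obtain ⟨fxw, hfxw⟩ := hgeo x w
  obtain ⟨fwy, hfwy⟩ := hgeo w y
  obtain ⟨fxy, hfxy⟩ := hgeo x y
  obtain ⟨fxz, hfxz⟩ := hgeo x z
  obtain ⟨fzy, hfzy⟩ := hgeo z y
  set A : Set X := fxw '' Set.Icc 0 (dist x w) with hA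
  set B : Set X := fwy '' Set.Icc 0 (dist w y) with hB
  set C : Set X := fxy '' Set.Icc 0 (dist x y) with hC
  set A2 : Set X := fxz '' Set.Icc 0 (dist x z) with hA2
  set B2 : Set X := fzy '' Set.Icc 0 (dist z y) with hB2
  have hsA : IsGeodesicSegmentSet A x w := ⟨fxw, hfxw, rfl⟩
  have hsB : IsGeodesicSegmentSet B w y := ⟨fwy, hfwy, rfl⟩
  have hsC : IsGeodesicSegmentSet C x y := ⟨fxy, hfxy, rfl⟩
  have hsA2 : IsGeodesicSegmentSet A2 x z := ⟨fxz, hfxz, rfl⟩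
  have hsB2 : IsGeodesicSegmentSet B2 z y := ⟨fzy, hfzy, rfl⟩

  have hAne : A.Nonempty := ⟨x, (endpoint_mem hsA).1⟩
  have hBne : B.Nonempty := ⟨y, (endpoint_mem hsB).2⟩
  have hcont : ContinuousOn (fun t => infDist (fxy t) A - infDist (fxy t) B)
      (Set.Icc 0 (dist x y)) := by
    have hlip : LipschitzOnWith 1 fxy (Set.Icc 0 (dist x y)) := by
      apply LipschitzOnWith.of_dist_le_mul
      intro s hs t ht
      rw [hfxy.2.2 s hs t ht, Real.dist_eq, NNReal.coe_one, one_mul]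
    have hc := hlip.continuousOn
    exact ((continuous_infDist_pt A).comp_continuousOn hc).sub
      ((continuous_infDist_pt B).comp_continuousOn hc)
  have h0d : (0:ℝ) ≤ dist x y := dist_nonneg
  have hx0 : fxy 0 = x := hfxy.1
  have hyL : fxy (dist x y) = y := hfxy.2.1
  have hφ0 : (fun t => infDist (fxy t) A - infDist (fxy t) B) 0 ≤ 0 := by
    simp only [hx0]
    have : infDist x A = 0 := infDist_zero_of_mem (endpoint_mem hsA).1
    rw [this]
    have := infDist_nonneg (s := B) (x := x)
    linarith
  have hφL : 0 ≤ (fun t => infDist (fxy t) A - infDist (fxy t) B) (dist x y) := by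
    simp only [hyL]
    have : infDist y B = 0 := infDist_zero_of_mem (endpoint_mem hsB).2
    rw [this]
    have := infDist_nonneg (s := A) (x := y)
    linarith
  obtain ⟨t, ht, hφt⟩ : ∃ t ∈ Set.Icc 0 (dist x y),
      infDist (fxy t) A - infDist (fxy t) B = 0 := by
    have := intermediate_value_Icc h0d hcont
    have h0mem : (0:ℝ) ∈ Set.Icc ((fun t => infDist (fxy t) A - infDist (fxy t) B) 0)
        ((fun t => infDist (fxy t) A - infDist (fxy t) B) (dist x y)) := ⟨hφ0, hφL⟩
    obtain ⟨t, ht, hfe⟩ := this h0mem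
    exact ⟨t, ht, hfe⟩
  set p : X := fxy t with hp
  have hpC : p ∈ C := ⟨t, ht, rfl⟩
  -- both infDists ≤ δ
  have hthin1 := hthin x w y A B C hsA hsB hsC p hpC
  obtain ⟨q, hq, hdpq⟩ := hthin1
  have hinf_both : infDist p A ≤ δ ∧ infDist p B ≤ δ := by
    have key : infDist p A ≤ δ ∨ infDist p B ≤ δ := by
      cases hq with
      | inl h => exact Or.inl (le_trans (infDist_le_dist_of_mem h) hdpq)
      | inr h => exact Or.inr (le_trans (infDist_le_dist_of_mem h) hdpq)
    have heq : infDist p A = infDist p B := by linarith [hφt]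
    cases key with
    | inl h => exact ⟨h, heq ▸ h⟩
    | inr h => exact ⟨by rw [heq]; exact h, h⟩
  -- witnesses within 2δ
  obtain ⟨q1, hq1A, hq1d⟩ : ∃ q1 ∈ A, dist p q1 < 2 * δ := by
    have := (infDist_lt_iff hAne).mp (lt_of_le_of_lt hinf_both.1 ((by linarith : δ < 2 * δ)))
    exact this
  obtain ⟨q2, hq2B, hq2d⟩ : ∃ q2 ∈ B, dist p q2 < 2 * δ := by
    have := (infDist_lt_iff hBne).mp (lt_of_le_of_lt hinf_both.2 ((by linarith : δ < 2 * δ)))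
    exact this
  -- dist w p ≤ gromovProd w x y + 4δ
  have hq1dec : dist x q1 + dist q1 w = dist x w := dist_decomp hsA hq1A
  have hq2dec : dist w q2 + dist q2 y = dist w y := dist_decomp hsB hq2B
  have hpdec : dist x p + dist p y = dist x y := dist_decomp hsC hpC
  have hup : dist w p ≤ gromovProd w x y + 4 * δ := by
    have t1 : dist x p ≤ dist x q1 + dist q1 p := dist_triangle ..
    have t2 : dist q1 w ≥ dist w p - dist p q1 := by
      have h1 := dist_triangle w q1 p
      have h2 := dist_comm q1 p
      have h3 := dist_comm q1 w
      linarith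
    have t3 : dist p y ≤ dist p q2 + dist q2 y := dist_triangle ..
    have t4 : dist w q2 ≥ dist w p - dist p q2 := by
      have h1 := dist_triangle w q2 p
      have h2 := dist_comm q2 p
      linarith
    have hq1p : dist q1 p = dist p q1 := dist_comm ..
    unfold gromovProd
    have hxw : dist x w = dist w x := dist_comm ..
    have hwy : dist w y = dist y w := dist_comm ..
    nlinarith [hq1dec, hq2dec, hpdec, t1, t2, t3, t4, hq1d, hq2d]
  -- lower bound via triangle x z y
  have hthin2 := hthin x z y A2 B2 C hsA2 hsB2 hsC p hpC
  obtain ⟨q3, hq3, hq3d⟩ := hthin2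
  have hlow : min (gromovProd w x z) (gromovProd w z y) - δ ≤ dist w p := by
    cases hq3 with
    | inl h =>
      have := gromovProd_le_dist_of_mem hsA2 h w
      have ht5 : dist w p ≥ dist w q3 - dist p q3 := by
        have h1 := dist_triangle w p q3
        linarith
      calc min (gromovProd w x z) (gromovProd w z y) - δ
          ≤ gromovProd w x z - δ := by
            have := min_le_left (gromovProd w x z) (gromovProd w z y); linarith
        _ ≤ dist w q3 - dist p q3 := by
            have hle : dist p q3 ≤ δ := hq3d
            linarith
        _ ≤ dist w p := ht5
    | inr h =>
      have := gromovProd_le_dist_of_mem hsB2 h w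
      have ht5 : dist w p ≥ dist w q3 - dist p q3 := by
        have h1 := dist_triangle w p q3
        linarith
      calc min (gromovProd w x z) (gromovProd w z y) - δ
          ≤ gromovProd w z y - δ := by
            have := min_le_right (gromovProd w x z) (gromovProd w z y); linarith
        _ ≤ dist w q3 - dist p q3 := by linarith [hq3d]
        _ ≤ dist w p := ht5
  linarith


/-! ### Auxiliary lemmas -/

lemma ev_pair {Q : ℕ × ℕ → Prop} :
    (∀ᶠ p : ℕ × ℕ in atTop, Q p) ↔ ∃ N : ℕ, ∀ i ≥ N, ∀ j ≥ N, Q (i, j) := by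
  rw [Filter.eventually_atTop]
  constructor
  · rintro ⟨a, ha⟩
    exact ⟨max a.1 a.2, fun i hi j hj =>
      ha (i, j) ⟨le_trans (le_max_left _ _) hi, le_trans (le_max_right _ _) hj⟩⟩
  · rintro ⟨N, hN⟩
    exact ⟨(N, N), fun b hb => by have := hN b.1 hb.1 b.2 hb.2; simpa using this⟩

lemma gromovProd_comm (x a b : X) : gromovProd x a b = gromovProd x b a := by
  unfold gromovProd; rw [dist_comm a b]; ring

lemma gromovProd_nonneg (x a b : X) : 0 ≤ gromovProd x a b := by
  unfold gromovProd
  have := dist_triangle a x b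
  have := dist_comm x b
  linarith

lemma gromovProd_base (x y a b : X) : gromovProd y a b - dist x y ≤ gromovProd x a b := by
  unfold gromovProd
  have h1 := dist_triangle a x y
  have h2 := dist_triangle b x y
  linarith

def gpT (x : X) (u v : GromovSeq X) : ℝ≥0∞ :=
  liminf (fun p : ℕ × ℕ => ENNReal.ofReal (gromovProd x (u.1 p.1) (v.1 p.2))) atTop

lemma ofReal_le_liminf {g : ℕ × ℕ → ℝ} {r : ℝ} (h : ∀ᶠ p in (atTop : Filter (ℕ × ℕ)), r ≤ g p) :
    ENNReal.ofReal r ≤ liminf (fun p => ENNReal.ofReal (g p)) atTop := by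
  rw [Filter.liminf_eq]
  exact le_sSup (h.mono fun p hp => ENNReal.ofReal_le_ofReal hp)

lemma real_lt_of_lt_liminf {g : ℕ × ℕ → ℝ} {r : ℝ≥0}
    (h : (r : ℝ≥0∞) < liminf (fun p => ENNReal.ofReal (g p)) atTop) :
    ∀ᶠ p in (atTop : Filter (ℕ × ℕ)), (r : ℝ) < g p := by
  have := Filter.eventually_lt_of_lt_liminf h
  refine this.mono fun p hp => ?_
  by_contra hle
  push_neg at hle
  rw [← ENNReal.ofReal_coe_nnreal] at hp
  exact absurd hp (not_lt.mpr (ENNReal.ofReal_le_ofReal hle))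

lemma coe_le_add_ofReal {r : ℝ≥0} {c : ℝ} {T : ℝ≥0∞}
    (h : ENNReal.ofReal ((r : ℝ) - c) ≤ T) : (r : ℝ≥0∞) ≤ T + ENNReal.ofReal c := by
  calc (r : ℝ≥0∞) = ENNReal.ofReal ((r : ℝ) - c + c) := by
        rw [sub_add_cancel, ENNReal.ofReal_coe_nnreal]
    _ ≤ ENNReal.ofReal ((r : ℝ) - c) + ENNReal.ofReal c := ENNReal.ofReal_add_le
    _ ≤ T + ENNReal.ofReal c := add_le_add_left h _

lemma gpT_eq_top_iff {x : X} {u v : GromovSeq X} :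
    gpT x u v = ⊤ ↔
      Tendsto (fun p : ℕ × ℕ => gromovProd x (u.1 p.1) (v.1 p.2)) atTop atTop := by
  constructor
  · intro h
    rw [Filter.tendsto_atTop]
    intro b
    have hb : ((Real.toNNReal b : ℝ≥0) : ℝ≥0∞) < gpT x u v := by
      rw [h]; exact ENNReal.coe_lt_top
    have hev := real_lt_of_lt_liminf (g := fun p => gromovProd x (u.1 p.1) (v.1 p.2)) hb
    exact hev.mono fun p hp => le_of_lt (lt_of_le_of_lt (Real.le_coe_toNNReal b) hp)
  · intro h
    rw [eq_top_iff]
    refine ENNReal.le_of_forall_nnreal_lt fun r _ => ?_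
    have hev : ∀ᶠ p in (atTop : Filter (ℕ × ℕ)),
        (r : ℝ) ≤ gromovProd x (u.1 p.1) (v.1 p.2) := (Filter.tendsto_atTop.mp h) r
    calc (r : ℝ≥0∞) = ENNReal.ofReal (r : ℝ) := (ENNReal.ofReal_coe_nnreal).symm
      _ ≤ gpT x u v := ofReal_le_liminf hev

lemma rel_of_gpT_top {x : X} {u v : GromovSeq X} (h : gpT x u v = ⊤) : gromovRel u v := by
  intro y
  have hx := gpT_eq_top_iff.mp h
  rw [Filter.tendsto_atTop]
  intro M
  have := Filter.tendsto_atTop.mp hx (M + dist y x)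
  refine this.mono fun p hp => ?_
  have := gromovProd_base y x (u.1 p.1) (v.1 p.2)
  linarith

lemma gpT_top_of_rel {x : X} {u v : GromovSeq X} (h : gromovRel u v) : gpT x u v = ⊤ :=
  gpT_eq_top_iff.mpr (h x)

section FourPoint

variable {δ₁ : ℝ}

/-- The 4-point hypothesis. -/
def FP (X : Type*) [MetricSpace X] (δ₁ : ℝ) : Prop :=
  ∀ w a b c : X, min (gromovProd w a c) (gromovProd w c b) - δ₁ ≤ gromovProd w a b

lemma gromovRel_equivalence (hfp : FP X δ₁) (hδ₁ : 0 ≤ δ₁) :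
    Equivalence (gromovRel (X := X)) := by
  constructor
  · intro u x; exact u.2 x
  · intro u v h x
    have hx := h x
    have hswap : Tendsto (Prod.swap : ℕ × ℕ → ℕ × ℕ) atTop atTop := by
      rw [← Filter.prod_atTop_atTop_eq]
      exact tendsto_snd.prodMk tendsto_fst
    exact (hx.comp hswap).congr fun p => gromovProd_comm x _ _
  · intro u v w huv hvw x
    rw [Filter.tendsto_atTop]
    intro M
    have h1 := Filter.tendsto_atTop.mp (huv x) (M + δ₁)
    have h2 := Filter.tendsto_atTop.mp (hvw x) (M + δ₁)
    rw [ev_pair] at h1 h2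
    obtain ⟨N1, hN1⟩ := h1
    obtain ⟨N2, hN2⟩ := h2
    rw [ev_pair]
    refine ⟨max N1 N2, fun i hi j hj => ?_⟩
    set k := max N1 N2 with hk
    have ha := hN1 i (le_trans (le_max_left _ _) hi) k (le_max_left _ _)
    have hb := hN2 k (le_max_right _ _) j (le_trans (le_max_right _ _) hj)
    have := hfp x (u.1 i) (w.1 j) (v.1 k)
    have := le_min ha hb
    linarith

lemma rel_of_mk_eq (hfp : FP X δ₁) (hδ₁ : 0 ≤ δ₁) {u v : GromovSeq X}
    (h : Quot.mk gromovRel u = Quot.mk gromovRel v) : gromovRel u v :=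
  ((gromovRel_equivalence hfp hδ₁).eqvGen_iff).mp (Quot.eq.mp h)

lemma gpT_comm (x : X) (u v : GromovSeq X) : gpT x u v = gpT x v u := by
  unfold gpT
  rw [Filter.liminf_eq, Filter.liminf_eq]
  congr 1
  ext a
  simp only [Set.mem_setOf_eq, ev_pair]
  constructor
  · rintro ⟨N, h⟩
    exact ⟨N, fun i hi j hj => by
      have := h j hj i hi
      rwa [gromovProd_comm x (u.1 j) (v.1 i)] at this⟩
  · rintro ⟨N, h⟩
    exact ⟨N, fun i hi j hj => by
      have := h j hj i hi
      rwa [gromovProd_comm x (v.1 j) (u.1 i)] at this⟩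

lemma gpT_rep_le (hfp : FP X δ₁) (hδ₁ : 0 ≤ δ₁) {x : X} {u v u' v' : GromovSeq X}
    (hu : gromovRel u u') (hv : gromovRel v v') :
    gpT x u' v' ≤ gpT x u v + ENNReal.ofReal (2 * δ₁) := by
  refine ENNReal.le_of_forall_nnreal_lt fun r hr => ?_
  have hev := real_lt_of_lt_liminf (g := fun p => gromovProd x (u'.1 p.1) (v'.1 p.2)) hr
  rw [ev_pair] at hev
  obtain ⟨N0, h0⟩ := hev
  have h1 := Filter.tendsto_atTop.mp (hu x) (r : ℝ)
  have h2 := Filter.tendsto_atTop.mp (hv x) (r : ℝ)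
  rw [ev_pair] at h1 h2
  obtain ⟨N1, hN1⟩ := h1
  obtain ⟨N2, hN2⟩ := h2
  set N := max N0 (max N1 N2) with hN
  have hNN0 : N0 ≤ N := le_max_left _ _
  have hNN1 : N1 ≤ N := le_trans (le_max_left _ _) (le_max_right _ _)
  have hNN2 : N2 ≤ N := le_trans (le_max_right _ _) (le_max_right _ _)
  have key : ∀ᶠ p : ℕ × ℕ in atTop, (r : ℝ) - 2 * δ₁ ≤ gromovProd x (u.1 p.1) (v.1 p.2) := by
    rw [ev_pair]
    refine ⟨N, fun i hi j hj => ?_⟩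
    have hu'v' : (r : ℝ) < gromovProd x (u'.1 N) (v'.1 N) := h0 N hNN0 N hNN0
    have huu' : (r : ℝ) ≤ gromovProd x (u.1 i) (u'.1 N) :=
      hN1 i (le_trans hNN1 hi) N hNN1
    have hvv' : (r : ℝ) ≤ gromovProd x (v'.1 N) (v.1 j) := by
      have := hN2 j (le_trans hNN2 hj) N hNN2
      rwa [gromovProd_comm] at this
    have s1 := hfp x (u'.1 N) (v.1 j) (v'.1 N)
    have s2 := hfp x (u.1 i) (v.1 j) (u'.1 N)
    have m1 := le_min (le_of_lt hu'v') hvv'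
    have hminr : min ((r : ℝ)) ((r : ℝ) - δ₁) = (r : ℝ) - δ₁ := min_eq_right (by linarith)
    calc (r : ℝ) - 2 * δ₁ = (r : ℝ) - δ₁ - δ₁ := by ring
      _ = min ((r : ℝ)) ((r : ℝ) - δ₁) - δ₁ := by rw [hminr]
      _ ≤ min (gromovProd x (u.1 i) (u'.1 N)) (gromovProd x (u'.1 N) (v.1 j)) - δ₁ := by
          have := min_le_min huu' (show (r : ℝ) - δ₁ ≤ gromovProd x (u'.1 N) (v.1 j) by linarith)
          linarith
      _ ≤ gromovProd x (u.1 i) (v.1 j) := s2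
  exact coe_le_add_ofReal (le_trans (ofReal_le_liminf key) (le_refl _))

lemma le_gpB {x : X} {ξ η : GromovBoundary X} {u v : GromovSeq X}
    (hu : Quot.mk gromovRel u = ξ) (hv : Quot.mk gromovRel v = η) :
    gpT x u v ≤ gromovProdB x ξ η := by
  unfold gromovProdB
  exact le_iSup_of_le u (le_iSup_of_le hu (le_iSup_of_le v (le_iSup_of_le hv (le_refl _))))

lemma gpB_le (hfp : FP X δ₁) (hδ₁ : 0 ≤ δ₁) {x : X} {ξ η : GromovBoundary X}
    {u v : GromovSeq X} (hu : Quot.mk gromovRel u = ξ) (hv : Quot.mk gromovRel v = η) :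
    gromovProdB x ξ η ≤ gpT x u v + ENNReal.ofReal (2 * δ₁) := by
  unfold gromovProdB
  refine iSup_le fun u' => iSup_le fun hu' => iSup_le fun v' => iSup_le fun hv' => ?_
  exact gpT_rep_le hfp hδ₁ (rel_of_mk_eq hfp hδ₁ (hu.trans hu'.symm))
    (rel_of_mk_eq hfp hδ₁ (hv.trans hv'.symm))

lemma gpB_self (x : X) (ξ : GromovBoundary X) : gromovProdB x ξ ξ = ⊤ := by
  obtain ⟨u, hu⟩ := Quot.exists_rep ξ
  rw [eq_top_iff, ← gpT_top_of_rel (x := x) (u := u) (v := u) (fun y => u.2 y)]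
  exact le_gpB hu hu

lemma eq_of_gpB_top (hfp : FP X δ₁) (hδ₁ : 0 ≤ δ₁) {x : X} {ξ η : GromovBoundary X}
    (h : gromovProdB x ξ η = ⊤) : ξ = η := by
  obtain ⟨u, hu⟩ := Quot.exists_rep ξ
  obtain ⟨v, hv⟩ := Quot.exists_rep η
  have hle := gpB_le (x := x) hfp hδ₁ hu hv
  rw [h, top_le_iff] at hle
  have hT : gpT x u v = ⊤ := by
    by_contra hne
    exact ENNReal.add_ne_top.mpr ⟨hne, ENNReal.ofReal_ne_top⟩ hle
  rw [← hu, ← hv]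
  exact Quot.sound (rel_of_gpT_top hT)

lemma gpB_comm (x : X) (ξ η : GromovBoundary X) : gromovProdB x ξ η = gromovProdB x η ξ := by
  have key : ∀ ξ η : GromovBoundary X, gromovProdB x ξ η ≤ gromovProdB x η ξ := by
    intro ξ η
    unfold gromovProdB
    refine iSup_le fun u => iSup_le fun hu => iSup_le fun v => iSup_le fun hv => ?_
    have : gpT x u v = gpT x v u := gpT_comm x u v
    exact le_trans (le_of_eq this) (le_gpB hv hu)
  exact le_antisymm (key ξ η) (key η ξ)

lemma gpB_fourpoint (hfp : FP X δ₁) (hδ₁ : 0 ≤ δ₁) (x : X) (ξ η ζ : GromovBoundary X) :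
    min (gromovProdB x ξ η) (gromovProdB x η ζ) ≤
      gromovProdB x ξ ζ + ENNReal.ofReal (5 * δ₁) := by
  obtain ⟨u, hu⟩ := Quot.exists_rep ξ
  obtain ⟨v, hv⟩ := Quot.exists_rep η
  obtain ⟨w, hw⟩ := Quot.exists_rep ζ
  have b1 := gpB_le (x := x) hfp hδ₁ hu hv
  have b2 := gpB_le (x := x) hfp hδ₁ hv hw
  have key : min (gpT x u v) (gpT x v w) ≤ gpT x u w + ENNReal.ofReal δ₁ := by
    refine ENNReal.le_of_forall_nnreal_lt fun r hr => ?_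
    have hr1 : (r : ℝ≥0∞) < gpT x u v := lt_of_lt_of_le hr (min_le_left _ _)
    have hr2 : (r : ℝ≥0∞) < gpT x v w := lt_of_lt_of_le hr (min_le_right _ _)
    have he1 := real_lt_of_lt_liminf (g := fun p => gromovProd x (u.1 p.1) (v.1 p.2)) hr1
    have he2 := real_lt_of_lt_liminf (g := fun p => gromovProd x (v.1 p.1) (w.1 p.2)) hr2
    rw [ev_pair] at he1 he2
    obtain ⟨N1, hN1⟩ := he1
    obtain ⟨N2, hN2⟩ := he2
    set N := max N1 N2 with hN
    have key2 : ∀ᶠ p : ℕ × ℕ in atTop, (r : ℝ) - δ₁ ≤ gromovProd x (u.1 p.1) (w.1 p.2) := by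
      rw [ev_pair]
      refine ⟨N, fun i hi j hj => ?_⟩
      have ha : (r : ℝ) < gromovProd x (u.1 i) (v.1 N) :=
        hN1 i (le_trans (le_max_left _ _) hi) N (le_max_left _ _)
      have hb : (r : ℝ) < gromovProd x (v.1 N) (w.1 j) :=
        hN2 N (le_max_right _ _) j (le_trans (le_max_right _ _) hj)
      have := hfp x (u.1 i) (w.1 j) (v.1 N)
      have := le_min (le_of_lt ha) (le_of_lt hb)
      linarith
    exact coe_le_add_ofReal (ofReal_le_liminf key2)
  have step : min (gromovProdB x ξ η) (gromovProdB x η ζ) ≤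
      min (gpT x u v) (gpT x v w) + ENNReal.ofReal (2 * δ₁) := by
    rw [← min_add_add_right]
    exact min_le_min b1 b2
  have hPle : gpT x u w ≤ gromovProdB x ξ ζ := le_gpB hu hw
  calc min (gromovProdB x ξ η) (gromovProdB x η ζ)
      ≤ min (gpT x u v) (gpT x v w) + ENNReal.ofReal (2 * δ₁) := step
    _ ≤ (gpT x u w + ENNReal.ofReal δ₁) + ENNReal.ofReal (2 * δ₁) := add_le_add_left key _
    _ = gpT x u w + (ENNReal.ofReal δ₁ + ENNReal.ofReal (2 * δ₁)) := by rw [add_assoc]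
    _ = gpT x u w + ENNReal.ofReal (δ₁ + 2 * δ₁) := by
        rw [ENNReal.ofReal_add hδ₁ (by linarith)]
    _ ≤ gromovProdB x ξ ζ + ENNReal.ofReal (5 * δ₁) := by
        refine add_le_add hPle (ENNReal.ofReal_le_ofReal (by linarith))

lemma gpT_base (x y : X) (u v : GromovSeq X) :
    gpT y u v ≤ gpT x u v + ENNReal.ofReal (dist x y) := by
  refine ENNReal.le_of_forall_nnreal_lt fun r hr => ?_
  have hev := real_lt_of_lt_liminf (g := fun p => gromovProd y (u.1 p.1) (v.1 p.2)) hr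
  have key : ∀ᶠ p : ℕ × ℕ in atTop,
      (r : ℝ) - dist x y ≤ gromovProd x (u.1 p.1) (v.1 p.2) := by
    refine hev.mono fun p hp => ?_
    have := gromovProd_base x y (u.1 p.1) (v.1 p.2)
    linarith
  exact coe_le_add_ofReal (ofReal_le_liminf key)

lemma gpB_base (x y : X) (ξ η : GromovBoundary X) :
    gromovProdB y ξ η ≤ gromovProdB x ξ η + ENNReal.ofReal (dist x y) := by
  unfold gromovProdB
  refine iSup_le fun u => iSup_le fun hu => iSup_le fun v => iSup_le fun hv => ?_
  exact le_trans (gpT_base x y u v) (add_le_add_left (le_gpB hu hv) _)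

lemma seq_map_map (g : Iso X) (u : GromovSeq X) :
    (u.map g).map g.symm = u := by
  apply Subtype.ext
  funext n
  exact g.symm_apply_apply _

lemma bMap_mk (g : Iso X) (u : GromovSeq X) :
    boundaryMap g (Quot.mk gromovRel u) = Quot.mk gromovRel (u.map g) := rfl

lemma bMap_bMap (g : Iso X) (ξ : GromovBoundary X) :
    boundaryMap g.symm (boundaryMap g ξ) = ξ := by
  induction ξ using Quot.ind with
  | _ u =>
    rw [bMap_mk, bMap_mk, seq_map_map]

lemma gromovProd_iso (g : Iso X) (x a b : X) :
    gromovProd (g x) (g a) (g b) = gromovProd x a b := by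
  rw [gromovProd_isometry, g.symm_apply_apply]

lemma gpT_iso (g : Iso X) (x : X) (u v : GromovSeq X) :
    gpT (g x) (u.map g) (v.map g) = gpT x u v := by
  unfold gpT
  congr 1
  funext p
  rw [show ((u.map g).1 p.1) = g (u.1 p.1) from rfl, show ((v.map g).1 p.2) = g (v.1 p.2) from rfl,
    gromovProd_iso]

lemma gpB_iso (g : Iso X) (x : X) (ξ η : GromovBoundary X) :
    gromovProdB (g x) (boundaryMap g ξ) (boundaryMap g η) = gromovProdB x ξ η := by
  have key : ∀ (g : Iso X) (x : X) (ξ η : GromovBoundary X),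
      gromovProdB x ξ η ≤ gromovProdB (g x) (boundaryMap g ξ) (boundaryMap g η) := by
    intro g x ξ η
    unfold gromovProdB
    refine iSup_le fun u => iSup_le fun hu => iSup_le fun v => iSup_le fun hv => ?_
    have h1 : Quot.mk gromovRel (u.map g) = boundaryMap g ξ := by rw [← hu]; rfl
    have h2 : Quot.mk gromovRel (v.map g) = boundaryMap g η := by rw [← hv]; rfl
    exact le_trans (le_of_eq (gpT_iso g x u v).symm) (le_gpB h1 h2)
  refine le_antisymm ?_ (key g x ξ η)
  have := key g.symm (g x) (boundaryMap g ξ) (boundaryMap g η)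
  rwa [g.symm_apply_apply, bMap_bMap, bMap_bMap] at this

end FourPoint

section Chains

variable {α : Type*}

def chainSet (ϱ : α → α → ℝ) (ξ η : α) : Set ℝ :=
  {s | ∃ (n : ℕ) (c : ℕ → α), c 0 = ξ ∧ c n = η ∧
    s = ∑ i ∈ Finset.range n, ϱ (c i) (c (i + 1))}

def chainD (ϱ : α → α → ℝ) (ξ η : α) : ℝ := sInf (chainSet ϱ ξ η)

lemma chainSet_nonempty (ϱ : α → α → ℝ) (ξ η : α) : (chainSet ϱ ξ η).Nonempty := by
  refine ⟨ϱ ξ η, 1, fun i => if i = 0 then ξ else η, by simp, by simp, by simp⟩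

lemma chainSet_bddBelow (ϱ : α → α → ℝ) (hnn : ∀ a b, 0 ≤ ϱ a b) (ξ η : α) :
    BddBelow (chainSet ϱ ξ η) := by
  refine ⟨0, fun s hs => ?_⟩
  obtain ⟨n, c, _, _, rfl⟩ := hs
  exact Finset.sum_nonneg fun i _ => hnn _ _

lemma chainD_le (ϱ : α → α → ℝ) (hnn : ∀ a b, 0 ≤ ϱ a b) (ξ η : α) :
    chainD ϱ ξ η ≤ ϱ ξ η :=
  csInf_le (chainSet_bddBelow ϱ hnn ξ η)
    ⟨1, fun i => if i = 0 then ξ else η, by simp, by simp, by simp⟩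

lemma chainD_nonneg (ϱ : α → α → ℝ) (hnn : ∀ a b, 0 ≤ ϱ a b) (ξ η : α) :
    0 ≤ chainD ϱ ξ η :=
  le_csInf (chainSet_nonempty ϱ ξ η) fun s hs => by
    obtain ⟨n, c, _, _, rfl⟩ := hs
    exact Finset.sum_nonneg fun i _ => hnn _ _

lemma chainD_self (ϱ : α → α → ℝ) (hnn : ∀ a b, 0 ≤ ϱ a b) (h0 : ∀ a, ϱ a a = 0) (ξ : α) :
    chainD ϱ ξ ξ = 0 :=
  le_antisymm (by have := chainD_le ϱ hnn ξ ξ; rw [h0] at this; exact this)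
    (chainD_nonneg ϱ hnn ξ ξ)

open Classical in
lemma frink_chain (ϱ : α → α → ℝ) (K : ℝ) (hK1 : 1 ≤ K) (hK2 : K ^ 2 ≤ 2)
    (h0 : ∀ a, ϱ a a = 0) (hnn : ∀ a b, 0 ≤ ϱ a b)
    (hq : ∀ a b c, ϱ a c ≤ K * max (ϱ a b) (ϱ b c)) :
    ∀ (n : ℕ) (c : ℕ → α),
      ϱ (c 0) (c n) ≤ 2 * ∑ i ∈ Finset.range n, ϱ (c i) (c (i + 1)) := by
  intro n
  induction n using Nat.strong_induction_on with
  | _ n IH =>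
    intro c
    rcases Nat.eq_zero_or_pos n with hn0 | hn1
    · subst hn0; simp [h0]
    set S := ∑ i ∈ Finset.range n, ϱ (c i) (c (i + 1)) with hS
    have hSnn : 0 ≤ S := Finset.sum_nonneg fun i _ => hnn _ _
    have hterm : ∀ i, i < n → ϱ (c i) (c (i + 1)) ≤ S := fun i hi =>
      Finset.single_le_sum (fun j _ => hnn (c j) (c (j + 1))) (Finset.mem_range.mpr hi)
    rcases le_or_gt S 0 with hS0 | hSpos
    · -- S = 0 case
      have hSz : S = 0 := le_antisymm hS0 hSnn
      have hpre : ϱ (c 0) (c (n - 1)) ≤ 0 := by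
        have h1 : ϱ (c 0) (c (n - 1)) ≤ 2 * ∑ i ∈ Finset.range (n - 1), ϱ (c i) (c (i + 1)) :=
          IH (n - 1) (Nat.sub_lt hn1 one_pos) c
        have h2 : ∑ i ∈ Finset.range (n - 1), ϱ (c i) (c (i + 1)) ≤ S := by
          rw [hS]
          exact Finset.sum_le_sum_of_subset_of_nonneg
            (Finset.range_subset_range.mpr (Nat.sub_le n 1)) (fun i _ _ => hnn _ _)
        linarith
      have hlast : ϱ (c (n - 1)) (c n) ≤ 0 := by
        have := hterm (n - 1) (Nat.sub_lt hn1 one_pos)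
        have hidx : n - 1 + 1 = n := Nat.succ_pred_eq_of_pos hn1
        rw [hidx] at this
        linarith
      have := hq (c 0) (c (n - 1)) (c n)
      have hmax : max (ϱ (c 0) (c (n - 1))) (ϱ (c (n - 1)) (c n)) ≤ 0 := max_le hpre hlast
      have hKnn : 0 ≤ K := by linarith
      nlinarith
    · -- main case
      set P : ℕ → Prop := fun m => ∑ i ∈ Finset.range m, ϱ (c i) (c (i + 1)) ≤ S / 2 with hP
      have hP0 : P 0 := by simp [hP]; linarith
      set k := Nat.findGreatest P n with hk
      have hPk : P k := Nat.findGreatest_spec (Nat.zero_le n) hP0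
      have hkn : k ≤ n := Nat.findGreatest_le n
      have hklt : k < n := by
        rcases lt_or_eq_of_le hkn with h | h
        · exact h
        · exfalso
          have : P n := h ▸ hPk
          rw [hP] at this
          simp only [← hS] at this
          linarith
      have hnotP : ¬ P (k + 1) :=
        Nat.findGreatest_is_greatest (Nat.lt_succ_self k) hklt
      have hhead : ∑ i ∈ Finset.range (k + 1), ϱ (c i) (c (i + 1)) > S / 2 := by
        by_contra h
        push_neg at h
        exact hnotP h
      have hsplit : S = ∑ i ∈ Finset.range (k + 1), ϱ (c i) (c (i + 1)) +
          ∑ i ∈ Finset.range (n - (k + 1)), ϱ (c (k + 1 + i)) (c (k + 1 + i + 1)) := by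
        rw [hS, ← Finset.sum_range_add (fun i => ϱ (c i) (c (i + 1))) (k + 1) (n - (k + 1)),
          Nat.add_sub_cancel' hklt]
      have htail : ∑ i ∈ Finset.range (n - (k + 1)), ϱ (c (k + 1 + i)) (c (k + 1 + i + 1)) <
          S / 2 := by linarith
      have IH1 : ϱ (c 0) (c k) ≤ S := by
        have := IH k hklt c
        have h2 : ∑ i ∈ Finset.range k, ϱ (c i) (c (i + 1)) ≤ S / 2 := hPk
        linarith
      have IH2 : ϱ (c (k + 1)) (c n) ≤ S := by
        have := IH (n - (k + 1)) (by omega) (fun i => c (k + 1 + i))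
        simp only [Nat.add_zero] at this
        rw [Nat.add_sub_cancel' hklt] at this
        simp only [← add_assoc] at this
        linarith
      have hmid : ϱ (c k) (c (k + 1)) ≤ S := hterm k hklt
      have hA : ϱ (c k) (c n) ≤ K * S := by
        have := hq (c k) (c (k + 1)) (c n)
        have hmax : max (ϱ (c k) (c (k + 1))) (ϱ (c (k + 1)) (c n)) ≤ S := max_le hmid IH2
        nlinarith
      have hB := hq (c 0) (c k) (c n)
      have hmax2 : max (ϱ (c 0) (c k)) (ϱ (c k) (c n)) ≤ K * S := by
        refine max_le ?_ hA
        nlinarith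
      nlinarith
lemma chainD_ge_half (ϱ : α → α → ℝ) (K : ℝ) (hK1 : 1 ≤ K) (hK2 : K ^ 2 ≤ 2)
    (h0 : ∀ a, ϱ a a = 0) (hnn : ∀ a b, 0 ≤ ϱ a b)
    (hq : ∀ a b c, ϱ a c ≤ K * max (ϱ a b) (ϱ b c)) (ξ η : α) :
    ϱ ξ η ≤ 2 * chainD ϱ ξ η := by
  have key : ∀ s ∈ chainSet ϱ ξ η, ϱ ξ η / 2 ≤ s := by
    rintro s ⟨n, c, hc0, hcn, rfl⟩
    have := frink_chain ϱ K hK1 hK2 h0 hnn hq n c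
    rw [hc0, hcn] at this
    linarith
  have := le_csInf (chainSet_nonempty ϱ ξ η) key
  unfold chainD
  linarith

lemma chainD_symm (ϱ : α → α → ℝ) (hnn : ∀ a b, 0 ≤ ϱ a b)
    (hsymm : ∀ a b, ϱ a b = ϱ b a) (ξ η : α) :
    chainD ϱ ξ η = chainD ϱ η ξ := by
  have key : ∀ ξ η : α, chainD ϱ ξ η ≤ chainD ϱ η ξ := by
    intro ξ η
    refine le_csInf (chainSet_nonempty ϱ η ξ) ?_
    rintro s ⟨n, c, hc0, hcn, rfl⟩
    refine csInf_le (chainSet_bddBelow ϱ hnn ξ η) ⟨n, fun i => c (n - i), by simp [hcn],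
      by simp [hc0], ?_⟩
    rw [← Finset.sum_range_reflect (fun j => ϱ (c j) (c (j + 1))) n]
    refine Finset.sum_congr rfl fun i hi => ?_
    have hi' : i < n := Finset.mem_range.mp hi
    have e1 : n - 1 - i + 1 = n - i := by omega
    have e2 : n - (i + 1) = n - 1 - i := by omega
    show ϱ (c (n - 1 - i)) (c (n - 1 - i + 1)) = ϱ (c (n - i)) (c (n - (i + 1)))
    rw [e1, ← e2]
    exact hsymm _ _
  exact le_antisymm (key ξ η) (key η ξ)

lemma chainSet_concat (ϱ : α → α → ℝ) {ξ η ζ : α} {s1 s2 : ℝ}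
    (h1 : s1 ∈ chainSet ϱ ξ η) (h2 : s2 ∈ chainSet ϱ η ζ) :
    s1 + s2 ∈ chainSet ϱ ξ ζ := by
  obtain ⟨n1, c1, hc10, hc1n, rfl⟩ := h1
  obtain ⟨n2, c2, hc20, hc2n, rfl⟩ := h2
  refine ⟨n1 + n2, fun i => if i < n1 then c1 i else c2 (i - n1), ?_, ?_, ?_⟩
  · by_cases h : 0 < n1
    · simp [h, hc10]
    · have hn1 : n1 = 0 := by omega
      subst hn1
      simp only [Nat.lt_irrefl, if_false, Nat.sub_zero]
      rw [hc20, ← hc1n, hc10]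
  · have h : ¬ (n1 + n2 < n1) := by omega
    simp only [h, if_false]
    rw [Nat.add_sub_cancel_left, hc2n]
  · rw [Finset.sum_range_add]
    congr 1
    · refine Finset.sum_congr rfl fun i hi => ?_
      have hi' : i < n1 := Finset.mem_range.mp hi
      rcases lt_or_eq_of_le (Nat.succ_le_of_lt hi') with h | h
      · simp [hi', h]
      · simp only [hi', if_true]
        have : ¬ (i + 1 < n1) := by omega
        simp only [this, if_false]
        have h0' : i + 1 - n1 = 0 := by omega
        rw [h0', hc20, ← hc1n]
        exact congrArg (ϱ (c1 i)) (congrArg c1 h)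
    · refine Finset.sum_congr rfl fun i hi => ?_
      have h1' : ¬ (n1 + i < n1) := by omega
      have h2' : ¬ (n1 + i + 1 < n1) := by omega
      simp only [h1', h2', if_false]
      congr 2 <;> omega

lemma chainD_triangle (ϱ : α → α → ℝ) (hnn : ∀ a b, 0 ≤ ϱ a b) (ξ η ζ : α) :
    chainD ϱ ξ ζ ≤ chainD ϱ ξ η + chainD ϱ η ζ := by
  have h1 : ∀ s1 ∈ chainSet ϱ ξ η, chainD ϱ ξ ζ - s1 ≤ chainD ϱ η ζ := by
    intro s1 hs1
    refine le_csInf (chainSet_nonempty ϱ η ζ) fun s2 hs2 => ?_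
    have := csInf_le (chainSet_bddBelow ϱ hnn ξ ζ) (chainSet_concat ϱ hs1 hs2)
    unfold chainD
    linarith
  have h2 : chainD ϱ ξ ζ - chainD ϱ η ζ ≤ chainD ϱ ξ η := by
    refine le_csInf (chainSet_nonempty ϱ ξ η) fun s1 hs1 => ?_
    have := h1 s1 hs1
    linarith
  linarith

lemma chainD_le_mul {ϱ ϱ' : α → α → ℝ} {C : ℝ} (hC : 0 < C)
    (hnn : ∀ a b, 0 ≤ ϱ a b) (hle : ∀ a b, ϱ a b ≤ C * ϱ' a b) (ξ η : α) :
    chainD ϱ ξ η ≤ C * chainD ϱ' ξ η := by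
  have key : chainD ϱ ξ η / C ≤ chainD ϱ' ξ η := by
    refine le_csInf (chainSet_nonempty ϱ' ξ η) ?_
    rintro s' ⟨n, c, hc0, hcn, rfl⟩
    have hmem : (∑ i ∈ Finset.range n, ϱ (c i) (c (i + 1))) ∈ chainSet ϱ ξ η :=
      ⟨n, c, hc0, hcn, rfl⟩
    have hD := csInf_le (chainSet_bddBelow ϱ hnn ξ η) hmem
    have hsum : ∑ i ∈ Finset.range n, ϱ (c i) (c (i + 1)) ≤
        C * ∑ i ∈ Finset.range n, ϱ' (c i) (c (i + 1)) := by
      rw [Finset.mul_sum]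
      exact Finset.sum_le_sum fun i _ => hle _ _
    rw [div_le_iff₀ hC]
    unfold chainD at hD ⊢
    nlinarith
  rw [div_le_iff₀ hC] at key
  linarith [key]

lemma chainD_map_le {β : Type*} (ϱ : α → α → ℝ) (ϱ' : β → β → ℝ) (F : α → β)
    (hnn' : ∀ a b, 0 ≤ ϱ' a b)
    (hiso : ∀ a b, ϱ' (F a) (F b) = ϱ a b) (ξ η : α) :
    chainD ϱ' (F ξ) (F η) ≤ chainD ϱ ξ η := by
  refine le_csInf (chainSet_nonempty ϱ ξ η) ?_
  rintro s ⟨n, c, hc0, hcn, rfl⟩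
  refine csInf_le (chainSet_bddBelow ϱ' hnn' (F ξ) (F η))
    ⟨n, fun i => F (c i), by show F (c 0) = F ξ; rw [hc0], by show F (c n) = F η; rw [hcn], ?_⟩
  exact (Finset.sum_congr rfl fun i _ => (hiso _ _).symm)

end Chains

/-! ### The visual quasi-metric and chain metric on the boundary -/

open Classical in
def qdist (χ : ℝ) (x : X) (ξ η : GromovBoundary X) : ℝ :=
  if ξ = η then 0 else Real.exp (-χ * (gromovProdB x ξ η).toReal)

def bD (χ : ℝ) (x : X) : GromovBoundary X → GromovBoundary X → ℝ := chainD (qdist χ x)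

section Visual

variable {δ₁ χ : ℝ}

lemma qdist_nonneg (χ : ℝ) (x : X) (ξ η : GromovBoundary X) : 0 ≤ qdist χ x ξ η := by
  unfold qdist
  split
  · exact le_refl 0
  · exact (Real.exp_pos _).le

lemma qdist_le_one (hχ : 0 ≤ χ) (x : X) (ξ η : GromovBoundary X) : qdist χ x ξ η ≤ 1 := by
  unfold qdist
  split
  · norm_num
  · rw [Real.exp_le_one_iff]
    have h1 : 0 ≤ (gromovProdB x ξ η).toReal := ENNReal.toReal_nonneg
    nlinarith

lemma qdist_self (χ : ℝ) (x : X) (ξ : GromovBoundary X) : qdist χ x ξ ξ = 0 := if_pos rfl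

lemma qdist_symm (χ : ℝ) (x : X) (ξ η : GromovBoundary X) :
    qdist χ x ξ η = qdist χ x η ξ := by
  unfold qdist
  by_cases h : ξ = η
  · rw [if_pos h, if_pos h.symm]
  · rw [if_neg h, if_neg (Ne.symm h), gpB_comm]

lemma qdist_pos (χ : ℝ) (x : X) {ξ η : GromovBoundary X} (h : ξ ≠ η) :
    0 < qdist χ x ξ η := by
  unfold qdist
  rw [if_neg h]
  exact Real.exp_pos _

lemma gpB_ne_top (hfp : FP X δ₁) (hδ₁ : 0 ≤ δ₁) {x : X} {ξ η : GromovBoundary X}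
    (h : ξ ≠ η) : gromovProdB x ξ η ≠ ⊤ :=
  fun htop => h (eq_of_gpB_top hfp hδ₁ htop)

lemma qdist_quasi (hfp : FP X δ₁) (hδ₁ : 0 < δ₁) (hχ0 : 0 ≤ χ) (x : X)
    (ξ η ζ : GromovBoundary X) :
    qdist χ x ξ ζ ≤ Real.exp (χ * (5 * δ₁)) * max (qdist χ x ξ η) (qdist χ x η ζ) := by
  set K := Real.exp (χ * (5 * δ₁)) with hK
  have hK1 : 1 ≤ K := Real.one_le_exp (by positivity)
  have hmaxnn : 0 ≤ max (qdist χ x ξ η) (qdist χ x η ζ) :=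
    le_trans (qdist_nonneg χ x ξ η) (le_max_left _ _)
  by_cases hxz : ξ = ζ
  · rw [qdist, if_pos hxz]
    exact mul_nonneg (by linarith) hmaxnn
  by_cases hxy : ξ = η
  · subst hxy
    rw [max_eq_right (by rw [qdist_self]; exact qdist_nonneg _ _ _ _)]
    nlinarith [qdist_nonneg χ x ξ ζ]
  by_cases hyz : η = ζ
  · subst hyz
    rw [max_eq_left (by rw [qdist_self]; exact qdist_nonneg _ _ _ _)]
    nlinarith [qdist_nonneg χ x ξ η]
  · have h4 := gpB_fourpoint hfp hδ₁.le x ξ η ζ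
    have hne1 := gpB_ne_top hfp hδ₁.le (x := x) hxy
    have hne2 := gpB_ne_top hfp hδ₁.le (x := x) hyz
    have hne3 := gpB_ne_top hfp hδ₁.le (x := x) hxz
    set t1 := (gromovProdB x ξ η).toReal
    set t2 := (gromovProdB x η ζ).toReal
    set t3 := (gromovProdB x ξ ζ).toReal
    have key : min t1 t2 ≤ t3 + 5 * δ₁ := by
      have hmono := ENNReal.toReal_mono
        (show gromovProdB x ξ ζ + ENNReal.ofReal (5 * δ₁) ≠ ⊤ from
          ENNReal.add_ne_top.mpr ⟨hne3, ENNReal.ofReal_ne_top⟩) h4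
      rw [ENNReal.toReal_add hne3 ENNReal.ofReal_ne_top,
        ENNReal.toReal_ofReal (by linarith)] at hmono
      rw [ENNReal.toReal_min hne1 hne2] at hmono
      exact hmono
    rw [qdist, if_neg hxz, qdist, if_neg hxy, qdist, if_neg hyz]
    have hmax : max (Real.exp (-χ * t1)) (Real.exp (-χ * t2)) =
        Real.exp (-χ * min t1 t2) := by
      rcases le_total t1 t2 with h | h
      · rw [min_eq_left h, max_eq_left]
        exact Real.exp_le_exp.mpr (by nlinarith)
      · rw [min_eq_right h, max_eq_right]
        exact Real.exp_le_exp.mpr (by nlinarith)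
    rw [hmax, hK, ← Real.exp_add]
    apply Real.exp_le_exp.mpr
    nlinarith [mul_le_mul_of_nonneg_left key hχ0]

lemma qdist_base (hfp : FP X δ₁) (hδ₁ : 0 < δ₁) (hχ0 : 0 ≤ χ) (x y : X)
    (ξ η : GromovBoundary X) :
    qdist χ x ξ η ≤ Real.exp (χ * dist x y) * qdist χ y ξ η := by
  by_cases h : ξ = η
  · rw [qdist, if_pos h, qdist, if_pos h, mul_zero]
  · have hne_x := gpB_ne_top hfp hδ₁.le (x := x) h
    have hne_y := gpB_ne_top hfp hδ₁.le (x := y) h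
    have hbase := gpB_base x y ξ η
    have hmono := ENNReal.toReal_mono
      (show gromovProdB x ξ η + ENNReal.ofReal (dist x y) ≠ ⊤ from
        ENNReal.add_ne_top.mpr ⟨hne_x, ENNReal.ofReal_ne_top⟩) hbase
    rw [ENNReal.toReal_add hne_x ENNReal.ofReal_ne_top,
      ENNReal.toReal_ofReal dist_nonneg] at hmono
    rw [qdist, if_neg h, qdist, if_neg h, ← Real.exp_add]
    apply Real.exp_le_exp.mpr
    nlinarith [mul_le_mul_of_nonneg_left hmono hχ0]

lemma bMap_inj (g : Iso X) {ξ η : GromovBoundary X}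
    (h : boundaryMap g ξ = boundaryMap g η) : ξ = η := by
  have := congrArg (boundaryMap g.symm) h
  rwa [bMap_bMap, bMap_bMap] at this

lemma qdist_iso (χ : ℝ) (g : Iso X) (x : X) (ξ η : GromovBoundary X) :
    qdist χ (g x) (boundaryMap g ξ) (boundaryMap g η) = qdist χ x ξ η := by
  unfold qdist
  by_cases h : ξ = η
  · rw [if_pos h, if_pos (by rw [h])]
  · rw [if_neg h, if_neg (fun hc => h (bMap_inj g hc)), gpB_iso]

/-! ### Chain metric lemmas -/

lemma chi_pos (hδ₁ : 0 < δ₁) (hχd : χ = Real.log 2 / (10 * δ₁)) : 0 < χ := by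
  rw [hχd]
  exact div_pos (Real.log_pos (by norm_num)) (by linarith)

lemma K_one_le (hδ₁ : 0 < δ₁) (hχd : χ = Real.log 2 / (10 * δ₁)) :
    1 ≤ Real.exp (χ * (5 * δ₁)) := by
  have hχ0 := (chi_pos hδ₁ hχd).le
  exact Real.one_le_exp (by positivity)

lemma K_sq_le (hδ₁ : 0 < δ₁) (hχd : χ = Real.log 2 / (10 * δ₁)) :
    Real.exp (χ * (5 * δ₁)) ^ 2 ≤ 2 := by
  rw [sq, ← Real.exp_add]
  have harg : χ * (5 * δ₁) + χ * (5 * δ₁) = Real.log 2 := by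
    rw [hχd]
    field_simp
    ring
  rw [harg, Real.exp_log (by norm_num)]

lemma bD_nonneg (χ : ℝ) (x : X) (ξ η : GromovBoundary X) : 0 ≤ bD χ x ξ η :=
  chainD_nonneg _ (qdist_nonneg χ x) ξ η

lemma bD_le_qdist (χ : ℝ) (x : X) (ξ η : GromovBoundary X) : bD χ x ξ η ≤ qdist χ x ξ η :=
  chainD_le _ (qdist_nonneg χ x) ξ η

lemma bD_le_one (hχ0 : 0 ≤ χ) (x : X) (ξ η : GromovBoundary X) : bD χ x ξ η ≤ 1 :=
  le_trans (bD_le_qdist χ x ξ η) (qdist_le_one hχ0 x ξ η)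

lemma bD_self (χ : ℝ) (x : X) (ξ : GromovBoundary X) : bD χ x ξ ξ = 0 :=
  chainD_self _ (qdist_nonneg χ x) (qdist_self χ x) ξ

lemma bD_symm (χ : ℝ) (x : X) (ξ η : GromovBoundary X) : bD χ x ξ η = bD χ x η ξ :=
  chainD_symm _ (qdist_nonneg χ x) (qdist_symm χ x) ξ η

lemma bD_triangle (χ : ℝ) (x : X) (ξ η ζ : GromovBoundary X) :
    bD χ x ξ ζ ≤ bD χ x ξ η + bD χ x η ζ :=
  chainD_triangle _ (qdist_nonneg χ x) ξ η ζ

lemma bD_half (hfp : FP X δ₁) (hδ₁ : 0 < δ₁) (hχd : χ = Real.log 2 / (10 * δ₁)) (x : X)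
    (ξ η : GromovBoundary X) : qdist χ x ξ η ≤ 2 * bD χ x ξ η := by
  have hχ0 : 0 ≤ χ := (chi_pos hδ₁ hχd).le
  exact chainD_ge_half _ (Real.exp (χ * (5 * δ₁))) (K_one_le hδ₁ hχd) (K_sq_le hδ₁ hχd)
    (qdist_self χ x) (qdist_nonneg χ x)
    (fun a b c => qdist_quasi hfp hδ₁ hχ0 x a b c) ξ η

lemma bD_pos (hfp : FP X δ₁) (hδ₁ : 0 < δ₁) (hχd : χ = Real.log 2 / (10 * δ₁)) (x : X)
    {ξ η : GromovBoundary X} (h : ξ ≠ η) : 0 < bD χ x ξ η := by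
  have h1 := bD_half hfp hδ₁ hχd x ξ η
  have h2 := qdist_pos χ x h
  linarith

lemma bD_base (hfp : FP X δ₁) (hδ₁ : 0 < δ₁) (hχ0 : 0 ≤ χ) (x y : X)
    (ξ η : GromovBoundary X) :
    bD χ x ξ η ≤ Real.exp (χ * dist x y) * bD χ y ξ η :=
  chainD_le_mul (Real.exp_pos _) (qdist_nonneg χ x)
    (fun a b => qdist_base hfp hδ₁ hχ0 x y a b) ξ η

lemma bD_iso (χ : ℝ) (g : Iso X) (x : X) (ξ η : GromovBoundary X) :
    bD χ (g x) (boundaryMap g ξ) (boundaryMap g η) = bD χ x ξ η := by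
  refine le_antisymm
    (chainD_map_le (qdist χ x) (qdist χ (g x)) (boundaryMap g)
      (qdist_nonneg χ (g x)) (fun a b => qdist_iso χ g x a b) ξ η) ?_
  have := chainD_map_le (qdist χ (g x)) (qdist χ (g.symm (g x))) (boundaryMap g.symm)
    (qdist_nonneg χ _) (fun a b => qdist_iso χ g.symm (g x) a b)
    (boundaryMap g ξ) (boundaryMap g η)
  rwa [g.symm_apply_apply, bMap_bMap, bMap_bMap] at this

lemma bD_abs_sub (χ : ℝ) (x : X) (ξ η ζ : GromovBoundary X) :
    |bD χ x ξ ζ - bD χ x η ζ| ≤ bD χ x ξ η := by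
  rw [abs_sub_le_iff]
  constructor
  · have := bD_triangle χ x ξ η ζ
    linarith
  · have := bD_triangle χ x η ξ ζ
    rw [bD_symm χ x η ξ] at this
    linarith

end Visual

/-! ### Sup metrics -/

section SupMetric

variable {ι : Type*}

def supAbs (f g : ι → ℝ) : ℝ := ⨆ i, |f i - g i|

lemma supAbs_nonneg (f g : ι → ℝ) : 0 ≤ supAbs f g :=
  Real.iSup_nonneg fun _ => abs_nonneg _

lemma supAbs_bddAbove {f g : ι → ℝ} (hf : ∀ i, f i ∈ Set.Icc (0:ℝ) 1)
    (hg : ∀ i, g i ∈ Set.Icc (0:ℝ) 1) :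
    BddAbove (Set.range fun i => |f i - g i|) := by
  refine ⟨1, ?_⟩
  rintro s ⟨i, rfl⟩
  have h1 := (hf i).1; have h2 := (hf i).2; have h3 := (hg i).1; have h4 := (hg i).2
  rw [abs_le]
  constructor <;> linarith

lemma supAbs_self (f : ι → ℝ) : supAbs f f = 0 :=
  le_antisymm (Real.iSup_le (fun i => by simp) le_rfl) (supAbs_nonneg f f)

lemma supAbs_comm (f g : ι → ℝ) : supAbs f g = supAbs g f := by
  unfold supAbs
  congr 1
  funext i
  exact abs_sub_comm _ _

lemma le_supAbs {f g : ι → ℝ} (hf : ∀ i, f i ∈ Set.Icc (0:ℝ) 1)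
    (hg : ∀ i, g i ∈ Set.Icc (0:ℝ) 1) (i : ι) : |f i - g i| ≤ supAbs f g :=
  le_ciSup (supAbs_bddAbove hf hg) i

lemma supAbs_le {f g : ι → ℝ} {C : ℝ} (hC : 0 ≤ C) (h : ∀ i, |f i - g i| ≤ C) :
    supAbs f g ≤ C :=
  Real.iSup_le h hC

lemma supAbs_triangle {f g h : ι → ℝ} (hf : ∀ i, f i ∈ Set.Icc (0:ℝ) 1)
    (hg : ∀ i, g i ∈ Set.Icc (0:ℝ) 1) (hh : ∀ i, h i ∈ Set.Icc (0:ℝ) 1) :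
    supAbs f h ≤ supAbs f g + supAbs g h := by
  refine Real.iSup_le (fun i => ?_)
    (add_nonneg (supAbs_nonneg _ _) (supAbs_nonneg _ _))
  calc |f i - h i| ≤ |f i - g i| + |g i - h i| := abs_sub_le _ _ _
    _ ≤ supAbs f g + supAbs g h := add_le_add (le_supAbs hf hg i) (le_supAbs hg hh i)

lemma supAbs_comp {ι' : Type*} (f g : ι → ℝ) (e : ι' → ι) (he : Function.Surjective e) :
    supAbs (f ∘ e) (g ∘ e) = supAbs f g := by
  unfold supAbs iSup
  congr 1
  have heq : (fun i' => |(f ∘ e) i' - (g ∘ e) i'|) = (fun i => |f i - g i|) ∘ e := rfl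
  rw [heq, Function.Surjective.range_comp he]

end SupMetric

/-! ### The metric on the boundary times the space -/

def expF (x : X) : X → ℝ := fun w => Real.exp (-dist x w)

def phiF (χ : ℝ) (p : GromovBoundary X × X) : X × GromovBoundary X → ℝ :=
  fun wζ => max 0 (1 - dist p.2 wζ.1) * bD χ wζ.1 p.1 wζ.2

def rhoD (χ : ℝ) (p q : GromovBoundary X × X) : ℝ :=
  supAbs (expF p.2) (expF q.2) + supAbs (phiF χ p) (phiF χ q)

section Rho

variable {δ₁ χ : ℝ}

lemma expF_mem (x : X) : ∀ w, expF x w ∈ Set.Icc (0:ℝ) 1 := by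
  intro w
  constructor
  · exact (Real.exp_pos _).le
  · rw [expF, Real.exp_le_one_iff]
    have := dist_nonneg (x := x) (y := w)
    linarith

lemma cutoff_mem (x w : X) : max 0 (1 - dist x w) ∈ Set.Icc (0:ℝ) 1 := by
  constructor
  · exact le_max_left _ _
  · rw [max_le_iff]
    have := dist_nonneg (x := x) (y := w)
    constructor <;> linarith

lemma phiF_mem (hχ0 : 0 ≤ χ) (p : GromovBoundary X × X) :
    ∀ wζ, phiF χ p wζ ∈ Set.Icc (0:ℝ) 1 := by
  intro wζ
  have h1 := cutoff_mem p.2 wζ.1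
  have h2 := bD_nonneg χ wζ.1 p.1 wζ.2
  have h3 := bD_le_one hχ0 wζ.1 p.1 wζ.2
  constructor
  · exact mul_nonneg h1.1 h2
  · calc max 0 (1 - dist p.2 wζ.1) * bD χ wζ.1 p.1 wζ.2 ≤ 1 * 1 :=
        mul_le_mul h1.2 h3 h2 one_pos.le
    _ = 1 := mul_one 1

lemma rhoD_nonneg (χ : ℝ) (p q : GromovBoundary X × X) : 0 ≤ rhoD χ p q :=
  add_nonneg (supAbs_nonneg _ _) (supAbs_nonneg _ _)

lemma rhoD_self (χ : ℝ) (p : GromovBoundary X × X) : rhoD χ p p = 0 := by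
  rw [rhoD, supAbs_self, supAbs_self, add_zero]

lemma rhoD_comm (χ : ℝ) (p q : GromovBoundary X × X) : rhoD χ p q = rhoD χ q p := by
  rw [rhoD, rhoD, supAbs_comm, supAbs_comm (phiF χ p)]

lemma rhoD_triangle (hχ0 : 0 ≤ χ) (p q r : GromovBoundary X × X) :
    rhoD χ p r ≤ rhoD χ p q + rhoD χ q r := by
  have h1 := supAbs_triangle (expF_mem p.2) (expF_mem q.2) (expF_mem r.2)
  have h2 := supAbs_triangle (phiF_mem hχ0 p) (phiF_mem hχ0 q) (phiF_mem hχ0 r)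
  unfold rhoD
  linarith

lemma le_rhoD_left (χ : ℝ) (p q : GromovBoundary X × X) (w : X) :
    |expF p.2 w - expF q.2 w| ≤ rhoD χ p q := by
  have := le_supAbs (expF_mem p.2) (expF_mem q.2) w
  have := supAbs_nonneg (phiF χ p) (phiF χ q)
  unfold rhoD
  linarith

lemma le_rhoD_right (hχ0 : 0 ≤ χ) (p q : GromovBoundary X × X) (wζ : X × GromovBoundary X) :
    |phiF χ p wζ - phiF χ q wζ| ≤ rhoD χ p q := by
  have := le_supAbs (phiF_mem hχ0 p) (phiF_mem hχ0 q) wζ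
  have := supAbs_nonneg (expF p.2) (expF q.2)
  unfold rhoD
  linarith

lemma rhoD_pos (hfp : FP X δ₁) (hδ₁ : 0 < δ₁) (hχd : χ = Real.log 2 / (10 * δ₁))
    {p q : GromovBoundary X × X} (hpq : p ≠ q) : 0 < rhoD χ p q := by
  have hχ0 := (chi_pos hδ₁ hχd).le
  by_cases hx : p.2 = q.2
  · have hξ : p.1 ≠ q.1 := fun h => hpq (Prod.ext h hx)
    have hb := bD_pos hfp hδ₁ hχd p.2 hξ
    have hkey := le_rhoD_right hχ0 p q (p.2, q.1)
    have e1 : phiF χ p (p.2, q.1) = bD χ p.2 p.1 q.1 := by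
      show max 0 (1 - dist p.2 p.2) * bD χ p.2 p.1 q.1 = bD χ p.2 p.1 q.1
      rw [dist_self]
      norm_num
    have e2 : phiF χ q (p.2, q.1) = 0 := by
      show max 0 (1 - dist q.2 p.2) * bD χ p.2 q.1 q.1 = 0
      rw [bD_self, mul_zero]
    rw [e1, e2, sub_zero, abs_of_nonneg (bD_nonneg _ _ _ _)] at hkey
    linarith
  · have hd : 0 < dist p.2 q.2 := dist_pos.mpr hx
    have hkey := le_rhoD_left χ p q p.2
    have e1 : expF p.2 p.2 = 1 := by
      show Real.exp (-dist p.2 p.2) = 1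
      rw [dist_self, neg_zero, Real.exp_zero]
    have e2 : expF q.2 p.2 = Real.exp (-dist p.2 q.2) := by
      show Real.exp (-dist q.2 p.2) = Real.exp (-dist p.2 q.2)
      rw [dist_comm]
    rw [e1, e2] at hkey
    have hlt : Real.exp (-dist p.2 q.2) < 1 := by
      rw [show (1:ℝ) = Real.exp 0 from (Real.exp_zero).symm]
      exact Real.exp_lt_exp.mpr (by linarith)
    rw [abs_of_nonneg (by linarith)] at hkey
    linarith

lemma rhoD_iso (χ : ℝ) (g : Iso X) (p q : GromovBoundary X × X) :
    rhoD χ (boundaryMap g p.1, g p.2) (boundaryMap g q.1, g q.2) = rhoD χ p q := by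
  unfold rhoD
  congr 1
  · have hsur : Function.Surjective (fun w : X => g w) := g.surjective
    rw [← supAbs_comp (expF (g p.2)) (expF (g q.2)) (fun w => g w) hsur]
    have h1 : expF (g p.2) ∘ (fun w : X => g w) = expF p.2 := by
      funext w
      simp only [Function.comp_apply, expF]
      rw [g.dist_eq]
    have h2 : expF (g q.2) ∘ (fun w : X => g w) = expF q.2 := by
      funext w
      simp only [Function.comp_apply, expF]
      rw [g.dist_eq]
    rw [h1, h2]
  · set e : X × GromovBoundary X → X × GromovBoundary X :=
      fun wζ => (g wζ.1, boundaryMap g wζ.2) with he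
    have hsur : Function.Surjective e := by
      rintro ⟨w, ζ⟩
      refine ⟨(g.symm w, boundaryMap g.symm ζ), ?_⟩
      rw [he]
      simp only
      rw [g.apply_symm_apply]
      congr 1
      have := bMap_bMap g.symm ζ
      rwa [IsometryEquiv.symm_symm] at this
    rw [← supAbs_comp (phiF χ (boundaryMap g p.1, g p.2)) (phiF χ (boundaryMap g q.1, g q.2))
      e hsur]
    have key : ∀ (ξ : GromovBoundary X) (x : X),
        phiF χ (boundaryMap g ξ, g x) ∘ e = phiF χ (ξ, x) := by
      intro ξ x
      funext wζ
      simp only [Function.comp_apply, phiF, he]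
      rw [g.dist_eq, bD_iso]
    rw [key p.1 p.2, key q.1 q.2]

end Rho


section TopologyLemmas

variable {δ₁ χ : ℝ}

lemma exp_neg_sub_le {a b : ℝ} (ha : 0 ≤ a) (h : a ≤ b) :
    Real.exp (-a) - Real.exp (-b) ≤ b - a := by
  have h2 : 1 - (b - a) ≤ Real.exp (-(b - a)) := by
    have := Real.add_one_le_exp (-(b - a))
    linarith
  have h3 : Real.exp (-a) ≤ 1 := Real.exp_le_one_iff.mpr (by linarith)
  have h4 : Real.exp (-b) = Real.exp (-a) * Real.exp (-(b - a)) := by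
    rw [← Real.exp_add]
    ring_nf
  nlinarith [Real.exp_pos (-a), Real.exp_pos (-(b - a))]

lemma exp_neg_lip {a b : ℝ} (ha : 0 ≤ a) (hb : 0 ≤ b) :
    |Real.exp (-a) - Real.exp (-b)| ≤ |a - b| := by
  rcases le_total a b with h | h
  · have h1 : Real.exp (-b) ≤ Real.exp (-a) := Real.exp_le_exp.mpr (by linarith)
    rw [abs_of_nonneg (by linarith), abs_of_nonpos (by linarith)]
    have := exp_neg_sub_le ha h
    linarith
  · have h1 : Real.exp (-a) ≤ Real.exp (-b) := Real.exp_le_exp.mpr (by linarith)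
    rw [abs_of_nonpos (by linarith), abs_of_nonneg (by linarith)]
    have := exp_neg_sub_le hb h
    linarith

lemma cutoff_lip (y y' w : X) :
    |max 0 (1 - dist y w) - max 0 (1 - dist y' w)| ≤ dist y y' := by
  rw [max_comm 0 (1 - dist y w), max_comm 0 (1 - dist y' w)]
  refine le_trans (abs_max_sub_max_le_abs _ _ _) ?_
  have := abs_dist_sub_le y y' w
  rw [show (1 - dist y w) - (1 - dist y' w) = -(dist y w - dist y' w) by ring, abs_neg]
  exact this

/-- Characterization of open sets of the boundary via the chain metric. -/
lemma isOpen_iff_ball (hfp : FP X δ₁) (hδ₁ : 0 < δ₁) (hχd : χ = Real.log 2 / (10 * δ₁))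
    (x₀ : X) {U : Set (GromovBoundary X)} :
    IsOpen U ↔ ∀ ξ ∈ U, ∃ ε > 0, {η | bD χ x₀ ξ η < ε} ⊆ U := by
  have hχpos := chi_pos hδ₁ hχd
  constructor
  · intro hU ξ hξ
    obtain ⟨R, hRtop, hsub⟩ := hU ξ hξ x₀
    refine ⟨Real.exp (-χ * (R.toReal + 1)) / 2, by positivity, ?_⟩
    intro η hη
    apply hsub
    show R < gromovProdB x₀ ξ η
    by_cases hξη : ξ = η
    · subst hξη
      rw [gpB_self]
      exact lt_top_iff_ne_top.mpr hRtop
    · have hq := bD_half hfp hδ₁ hχd x₀ ξ η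
      rw [qdist, if_neg hξη] at hq
      have hη' : bD χ x₀ ξ η < Real.exp (-χ * (R.toReal + 1)) / 2 := hη
      have hlt : Real.exp (-χ * (gromovProdB x₀ ξ η).toReal) <
          Real.exp (-χ * (R.toReal + 1)) := by linarith
      have htR : R.toReal + 1 < (gromovProdB x₀ ξ η).toReal := by
        have := Real.exp_lt_exp.mp hlt
        nlinarith
      have hPne := gpB_ne_top hfp hδ₁.le (x := x₀) hξη
      exact (ENNReal.toReal_lt_toReal hRtop hPne).mp (by linarith)
  · intro hcond ξ hξ x
    obtain ⟨ε, hε, hball⟩ := hcond ξ hξ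
    set r₀ := max 0 (Real.log (2 / ε) / χ) + dist x x₀ + 1 with hr₀def
    have hr₀ : 0 ≤ r₀ := by
      have h1 : (0:ℝ) ≤ max 0 (Real.log (2 / ε) / χ) := le_max_left _ _
      have h2 := dist_nonneg (x := x) (y := x₀)
      rw [hr₀def]
      linarith
    refine ⟨ENNReal.ofReal r₀, ENNReal.ofReal_ne_top, ?_⟩
    intro η hη
    apply hball
    show bD χ x₀ ξ η < ε
    by_cases hξη : ξ = η
    · subst hξη
      rw [bD_self]
      exact hε
    · have hPx := gpB_ne_top hfp hδ₁.le (x := x) hξη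
      have hPx₀ := gpB_ne_top hfp hδ₁.le (x := x₀) hξη
      have hη' : ENNReal.ofReal r₀ < gromovProdB x ξ η := hη
      have h1 : r₀ < (gromovProdB x ξ η).toReal :=
        (ENNReal.ofReal_lt_iff_lt_toReal hr₀ hPx).mp hη'
      have hbase := gpB_base x₀ x ξ η
      have h2 : (gromovProdB x ξ η).toReal ≤ (gromovProdB x₀ ξ η).toReal + dist x₀ x := by
        have := ENNReal.toReal_mono
          (ENNReal.add_ne_top.mpr ⟨hPx₀, ENNReal.ofReal_ne_top⟩) hbase
        rwa [ENNReal.toReal_add hPx₀ ENNReal.ofReal_ne_top,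
          ENNReal.toReal_ofReal dist_nonneg] at this
      have h3 : Real.log (2 / ε) / χ < (gromovProdB x₀ ξ η).toReal := by
        have hd : dist x₀ x = dist x x₀ := dist_comm _ _
        have hmax := le_max_right 0 (Real.log (2 / ε) / χ)
        rw [hr₀def] at h1
        linarith
      have hbq := bD_le_qdist χ x₀ ξ η
      rw [qdist, if_neg hξη] at hbq
      have hexp : Real.exp (-χ * (gromovProdB x₀ ξ η).toReal) < ε / 2 := by
        have harg : -χ * (gromovProdB x₀ ξ η).toReal < -Real.log (2 / ε) := by
          have := (div_lt_iff₀ hχpos).mp h3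
          nlinarith
        have hval : Real.exp (-Real.log (2 / ε)) = ε / 2 := by
          rw [← Real.log_inv, Real.exp_log (by positivity), inv_div]
        calc Real.exp (-χ * (gromovProdB x₀ ξ η).toReal)
            < Real.exp (-Real.log (2 / ε)) := Real.exp_lt_exp.mpr harg
          _ = ε / 2 := hval
      linarith

lemma bD_ball_isOpen (hfp : FP X δ₁) (hδ₁ : 0 < δ₁) (hχd : χ = Real.log 2 / (10 * δ₁))
    (x₀ : X) (c : GromovBoundary X) (r : ℝ) :
    IsOpen {η | bD χ x₀ c η < r} := by
  rw [isOpen_iff_ball hfp hδ₁ hχd x₀]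
  intro ξ hξ
  have hξ' : bD χ x₀ c ξ < r := hξ
  refine ⟨r - bD χ x₀ c ξ, by linarith, ?_⟩
  intro η hη
  have hη' : bD χ x₀ ξ η < r - bD χ x₀ c ξ := hη
  show bD χ x₀ c η < r
  have := bD_triangle χ x₀ c ξ η
  linarith

/-- Claim A: every `rhoD`-ball is open in the product topology. -/
lemma rho_ball_isOpen (hfp : FP X δ₁) (hδ₁ : 0 < δ₁) (hχd : χ = Real.log 2 / (10 * δ₁))
    (x₀ : X) (c : GromovBoundary X × X) (r : ℝ) :
    IsOpen {q : GromovBoundary X × X | rhoD χ c q < r} := by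
  have hχpos := chi_pos hδ₁ hχd
  have hχ0 := hχpos.le
  rw [isOpen_prod_iff]
  intro η y hq
  have hq' : rhoD χ c (η, y) < r := hq
  set s := r - rhoD χ c (η, y) with hs_def
  have hs : 0 < s := by rw [hs_def]; linarith
  set E := Real.exp (χ * (dist y x₀ + 1)) with hE_def
  have hE1 : 1 ≤ E := Real.one_le_exp (by positivity)
  have hEpos : 0 < E := lt_of_lt_of_le one_pos hE1
  refine ⟨{η' | bD χ x₀ η η' < s / (4 * E)}, Metric.ball y (s / 8),
    bD_ball_isOpen hfp hδ₁ hχd x₀ η (s / (4 * E)), Metric.isOpen_ball, ?_,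
    Metric.mem_ball_self (by positivity), ?_⟩
  · show bD χ x₀ η η < s / (4 * E)
    rw [bD_self]
    positivity
  · rintro ⟨η', y'⟩ ⟨h1, h2⟩
    have h1' : bD χ x₀ η η' < s / (4 * E) := h1
    have h2' : dist y y' < s / 8 := by
      rw [dist_comm]
      exact Metric.mem_ball.mp h2
    show rhoD χ c (η', y') < r
    -- S1 part
    have hS1 : supAbs (expF y) (expF y') ≤ dist y y' := by
      refine supAbs_le dist_nonneg (fun w => ?_)
      show |Real.exp (-dist y w) - Real.exp (-dist y' w)| ≤ dist y y'
      refine le_trans (exp_neg_lip dist_nonneg dist_nonneg) ?_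
      exact abs_dist_sub_le y y' w
    -- S2 part
    have hS2a : supAbs (phiF χ (η, y)) (phiF χ (η', y)) ≤ E * bD χ x₀ η η' := by
      refine supAbs_le (mul_nonneg hEpos.le (bD_nonneg χ x₀ η η')) (fun wζ => ?_)
      show |max 0 (1 - dist y wζ.1) * bD χ wζ.1 η wζ.2 -
        max 0 (1 - dist y wζ.1) * bD χ wζ.1 η' wζ.2| ≤ E * bD χ x₀ η η'
      rw [← mul_sub, abs_mul, abs_of_nonneg (le_max_left _ _)]
      by_cases hw : 1 ≤ dist y wζ.1
      · have hz : max 0 (1 - dist y wζ.1) = 0 := max_eq_left (by linarith)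
        rw [hz, zero_mul]
        exact mul_nonneg hEpos.le (bD_nonneg _ _ _ _)
      · push_neg at hw
        have hcut : max 0 (1 - dist y wζ.1) ≤ 1 := (cutoff_mem y wζ.1).2
        have habs := bD_abs_sub χ wζ.1 η η' wζ.2
        have hbase := bD_base hfp hδ₁ hχ0 wζ.1 x₀ η η'
        have hEw : Real.exp (χ * dist wζ.1 x₀) ≤ E := by
          rw [hE_def]
          apply Real.exp_le_exp.mpr
          have htr := dist_triangle wζ.1 y x₀
          have hcomm : dist wζ.1 y = dist y wζ.1 := dist_comm _ _
          nlinarith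
        have hb0 := bD_nonneg χ x₀ η η'
        have hcut0 : (0:ℝ) ≤ max 0 (1 - dist y wζ.1) := le_max_left _ _
        calc max 0 (1 - dist y wζ.1) * |bD χ wζ.1 η wζ.2 - bD χ wζ.1 η' wζ.2|
            ≤ 1 * (E * bD χ x₀ η η') := by
              apply mul_le_mul hcut ?_ (abs_nonneg _) one_pos.le
              refine le_trans habs (le_trans hbase ?_)
              exact mul_le_mul_of_nonneg_right hEw hb0
          _ = E * bD χ x₀ η η' := one_mul _
    have hS2b : supAbs (phiF χ (η', y)) (phiF χ (η', y')) ≤ dist y y' := by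
      refine supAbs_le dist_nonneg (fun wζ => ?_)
      show |max 0 (1 - dist y wζ.1) * bD χ wζ.1 η' wζ.2 -
        max 0 (1 - dist y' wζ.1) * bD χ wζ.1 η' wζ.2| ≤ dist y y'
      rw [← sub_mul, abs_mul]
      have h1 := cutoff_lip y y' wζ.1
      have h2 : |bD χ wζ.1 η' wζ.2| ≤ 1 := by
        rw [abs_of_nonneg (bD_nonneg _ _ _ _)]
        exact bD_le_one hχ0 _ _ _
      nlinarith [abs_nonneg (max 0 (1 - dist y wζ.1) - max 0 (1 - dist y' wζ.1)),
        abs_nonneg (bD χ wζ.1 η' wζ.2)]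
    have hS2 : supAbs (phiF χ (η, y)) (phiF χ (η', y')) ≤
        E * bD χ x₀ η η' + dist y y' := by
      refine le_trans (supAbs_triangle (phiF_mem hχ0 (η, y)) (phiF_mem hχ0 (η', y))
        (phiF_mem hχ0 (η', y'))) ?_
      linarith
    have hkey : rhoD χ (η, y) (η', y') < s := by
      have hEb : E * bD χ x₀ η η' < E * (s / (4 * E)) := by
        exact mul_lt_mul_of_pos_left h1' hEpos
      have hEb' : E * (s / (4 * E)) = s / 4 := by
        field_simp
      rw [rhoD]
      show supAbs (expF y) (expF y') + supAbs (phiF χ (η, y)) (phiF χ (η', y')) < s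
      rw [hEb'] at hEb
      linarith
    have htri := rhoD_triangle hχ0 c (η, y) (η', y')
    linarith

/-- Claim B: every product-open set is generated by `rhoD`-balls. -/
lemma prodOpen_rho (hfp : FP X δ₁) (hδ₁ : 0 < δ₁) (hχd : χ = Real.log 2 / (10 * δ₁))
    (x₀ : X) {U : Set (GromovBoundary X × X)} (hU : IsOpen U) :
    TopologicalSpace.GenerateOpen
      {V | ∃ (c : GromovBoundary X × X) (r : ℝ), V = {q | rhoD χ c q < r}} U := by
  have hχpos := chi_pos hδ₁ hχd
  have hχ0 := hχpos.le
  have key : ∀ q ∈ U, ∃ ε > 0, {q' | rhoD χ q q' < ε} ⊆ U := by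
    rintro ⟨η, y⟩ hq
    rw [isOpen_prod_iff] at hU
    obtain ⟨u, v, hu, hv, hηu, hyv, huv⟩ := hU η y hq
    rw [isOpen_iff_ball hfp hδ₁ hχd x₀] at hu
    obtain ⟨ε₁, hε₁, hball1⟩ := hu η hηu
    obtain ⟨ε₂, hε₂, hball2⟩ := Metric.isOpen_iff.mp hv y hyv
    set ε := min (1 - Real.exp (-ε₂)) (ε₁ * Real.exp (-χ * dist x₀ y)) with hε_def
    have hexp2 : Real.exp (-ε₂) < 1 := by
      rw [show (1:ℝ) = Real.exp 0 from Real.exp_zero.symm]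
      exact Real.exp_lt_exp.mpr (by linarith)
    have hεpos : 0 < ε := lt_min (by linarith) (by positivity)
    refine ⟨ε, hεpos, ?_⟩
    rintro ⟨η', y'⟩ hq'
    have hq'' : rhoD χ (η, y) (η', y') < ε := hq'
    apply huv
    constructor
    · -- η' ∈ u
      apply hball1
      show bD χ x₀ η η' < ε₁
      have hidx := le_rhoD_right hχ0 (η, y) (η', y') (y, η')
      have e1 : phiF χ (η, y) (y, η') = bD χ y η η' := by
        show max 0 (1 - dist y y) * bD χ y η η' = bD χ y η η'
        rw [dist_self]
        norm_num
      have e2 : phiF χ (η', y') (y, η') = 0 := by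
        show max 0 (1 - dist y' y) * bD χ y η' η' = 0
        rw [bD_self, mul_zero]
      rw [e1, e2, sub_zero, abs_of_nonneg (bD_nonneg _ _ _ _)] at hidx
      have hby : bD χ y η η' < ε := lt_of_le_of_lt hidx hq''
      have hbase := bD_base hfp hδ₁ hχ0 x₀ y η η'
      have hεle : ε ≤ ε₁ * Real.exp (-χ * dist x₀ y) := min_le_right _ _
      have hE := Real.exp_pos (χ * dist x₀ y)
      calc bD χ x₀ η η' ≤ Real.exp (χ * dist x₀ y) * bD χ y η η' := hbase
        _ < Real.exp (χ * dist x₀ y) * ε := by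
            exact mul_lt_mul_of_pos_left hby hE
        _ ≤ Real.exp (χ * dist x₀ y) * (ε₁ * Real.exp (-χ * dist x₀ y)) := by
            exact mul_le_mul_of_nonneg_left hεle hE.le
        _ = ε₁ := by
            rw [show Real.exp (χ * dist x₀ y) * (ε₁ * Real.exp (-χ * dist x₀ y)) =
              ε₁ * (Real.exp (χ * dist x₀ y) * Real.exp (-χ * dist x₀ y)) by ring,
              ← Real.exp_add]
            simp
    · -- y' ∈ v
      apply hball2
      show dist y' y < ε₂
      have hidx := le_rhoD_left χ (η, y) (η', y') y'
      have e1 : expF y y' = Real.exp (-dist y y') := rfl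
      have e2 : expF y' y' = 1 := by
        show Real.exp (-dist y' y') = 1
        rw [dist_self, neg_zero, Real.exp_zero]
      rw [e1, e2] at hidx
      have hle1 : Real.exp (-dist y y') ≤ 1 :=
        Real.exp_le_one_iff.mpr (by linarith [dist_nonneg (x := y) (y := y')])
      rw [abs_of_nonpos (by linarith)] at hidx
      have h1e : 1 - Real.exp (-dist y y') < ε := by linarith
      have hεle : ε ≤ 1 - Real.exp (-ε₂) := min_le_left _ _
      have : Real.exp (-ε₂) < Real.exp (-dist y y') := by linarith
      have := Real.exp_lt_exp.mp this
      rw [dist_comm]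
      linarith
  have hrepr : U = ⋃₀ {V | (∃ (c : GromovBoundary X × X) (r : ℝ),
      V = {q | rhoD χ c q < r}) ∧ V ⊆ U} := by
    ext q
    constructor
    · intro hq
      obtain ⟨ε, hε, hsub⟩ := key q hq
      refine ⟨{q' | rhoD χ q q' < ε}, ⟨⟨q, ε, rfl⟩, hsub⟩, ?_⟩
      show rhoD χ q q < ε
      rw [rhoD_self]
      exact hε
    · rintro ⟨V, ⟨_, hVU⟩, hqV⟩
      exact hVU hqV
  rw [hrepr]
  apply TopologicalSpace.GenerateOpen.sUnion
  rintro V ⟨⟨c, r, rfl⟩, -⟩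
  exact TopologicalSpace.GenerateOpen.basic _ ⟨c, r, rfl⟩

end TopologyLemmas


/-- **Theorem (Statement 3).** For a proper hyperbolic geodesic metric space `X`, the
product `∂X × X` admits an `Iso X`-invariant distance function inducing the product
topology. -/
theorem boundary_times_space_invariant_metric
    {X : Type} [MetricSpace X] [ProperSpace X]
    (hgeo : GeodesicSpace X) (hhyp : GromovHyperbolic X) :
    ∃ ρ : GromovBoundary X × X → GromovBoundary X × X → ℝ,
      IsMetricDist ρ ∧
      (∀ (g : Iso X) (pq : (GromovBoundary X × X) × (GromovBoundary X × X)),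
        ρ (boundaryMap g pq.1.1, g pq.1.2) (boundaryMap g pq.2.1, g pq.2.2) = ρ pq.1 pq.2) ∧
      distTopology ρ = (inferInstance : TopologicalSpace (GromovBoundary X × X)) := by
  classical
  rcases isEmpty_or_nonempty X with hemp | hne
  · haveI : IsEmpty (GromovBoundary X × X) := ⟨fun p => IsEmpty.false p.2⟩
    refine ⟨fun _ _ => 0, ⟨fun _ => rfl, fun a _ _ => (IsEmpty.false a).elim,
      fun _ _ => rfl, fun _ _ _ => by norm_num⟩, fun g pq => rfl, ?_⟩
    have hall : ∀ (t : TopologicalSpace (GromovBoundary X × X))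
        (s : Set (GromovBoundary X × X)), t.IsOpen s := by
      intro t s
      have hs : s = Set.univ := Set.eq_univ_of_forall fun p => (IsEmpty.false p).elim
      rw [hs]
      exact t.isOpen_univ
    apply TopologicalSpace.ext
    funext s
    exact propext ⟨fun _ => hall _ s, fun _ => hall _ s⟩
  · obtain ⟨x₀⟩ := hne
    obtain ⟨δ, hδ, hthin⟩ := hhyp
    have hδ₁ : (0:ℝ) < 5 * δ := by linarith
    have hfp : FP X (5 * δ) := fun w a b c => fourpoint hδ hgeo hthin w a b c
    set χ := Real.log 2 / (10 * (5 * δ)) with hχd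
    have hχpos : 0 < χ := chi_pos hδ₁ hχd
    refine ⟨rhoD χ, ⟨rhoD_self χ, fun a b hab => rhoD_pos hfp hδ₁ hχd hab,
      rhoD_comm χ, rhoD_triangle hχpos.le⟩, fun g pq => rhoD_iso χ g pq.1 pq.2, ?_⟩
    refine le_antisymm ?_ ?_
    · rw [TopologicalSpace.le_def]
      intro U hU
      exact prodOpen_rho hfp hδ₁ hχd x₀ hU
    · exact le_generateFrom (by rintro s ⟨c, r, rfl⟩; exact rho_ball_isOpen hfp hδ₁ hχd x₀ c r)


end PaperHyp
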